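/- arXiv:1602.00183 — 4 statements merged into one kernel-verified Lean document; each statement's English description precedes it below -/
import Mathlib

section
/- Let h : ℝ → ℝ be four times continuously differentiable in a neighborhood of x ∈ ℝ with h(x) ≠ 0. For Δx > 0 define the data-driven shape quantity η(Δx) = 2·(−h̄₋ + 2·h̄₀ − h̄₊)/(−h̄₋ + 5·h̄₀ + 2·h̄₊) (the denominator tends to 6·h(x) ≠ 0, so η is well-defined for all sufficiently small Δx). Then the adaptive k = 2 MQ-RBF reconstruction is third-order accurate with explicit leading term: (1/2 + η(Δx)/4)·(h̄₀ + h̄₊) = h(x) + (1/12)·h'''(x)·Δx³ + O(Δx⁴). -/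
open Set intervalIntegral

noncomputable def P3 (f : ℝ → ℝ) (x ξ : ℝ) : ℝ :=
  f x + iteratedDeriv 1 f x * (ξ - x) + iteratedDeriv 2 f x / 2 * (ξ - x) ^ 2
    + iteratedDeriv 3 f x / 6 * (ξ - x) ^ 3

lemma P3_continuous (f : ℝ → ℝ) (x : ℝ) : Continuous (P3 f x) := by
  unfold P3; continuity

lemma aux_iter (f : ℝ → ℝ) {U : Set ℝ} (hUo : IsOpen U) (hf : ContDiffOn ℝ 4 f U)
    {a b : ℝ} (hab : a < b) (hsub : Set.Icc a b ⊆ U) {k : ℕ} (hk : (k : WithTop ℕ∞) ≤ 4)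
    {y : ℝ} (hy : y ∈ Set.Icc a b) :
    iteratedDerivWithin k f (Set.Icc a b) y = iteratedDeriv k f y := by
  have hP : HasFTaylorSeriesUpToOn 4 f (ftaylorSeriesWithin ℝ f U) U :=
    hf.ftaylorSeriesWithin hUo.uniqueDiffOn
  have h1 := (hP.mono hsub).eq_iteratedFDerivWithin_of_uniqueDiffOn hk
      (uniqueDiffOn_Icc hab) hy
  have h2 : ftaylorSeriesWithin ℝ f U y k = iteratedFDeriv ℝ k f y := by
    simp only [ftaylorSeriesWithin]
    rw [iteratedFDerivWithin_of_isOpen k hUo (hsub hy)]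
  rw [iteratedDerivWithin_eq_iteratedFDerivWithin, iteratedDeriv_eq_iteratedFDeriv, ← h1, h2]

lemma aux_taylor_right (f : ℝ → ℝ) {U : Set ℝ} (hUo : IsOpen U) (hf : ContDiffOn ℝ 4 f U)
    {x b : ℝ} (hxb : x < b) (hsub : Set.Icc x b ⊆ U) :
    ∃ M, 0 ≤ M ∧ ∀ ξ ∈ Set.Icc x b, |f ξ - P3 f x ξ| ≤ M * (ξ - x) ^ 4 := by
  obtain ⟨C, hC⟩ := exists_taylor_mean_remainder_bound (n := 3) hxb.le (hf.mono hsub)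
  refine ⟨max C 0, le_max_right _ _, fun ξ hξ => ?_⟩
  have ht : taylorWithinEval f 3 (Set.Icc x b) x ξ = P3 f x ξ := by
    rw [taylor_within_apply]
    have h0 := aux_iter f hUo hf hxb hsub (k := 0) (by norm_num) (left_mem_Icc.2 hxb.le)
    have h1 := aux_iter f hUo hf hxb hsub (k := 1) (by norm_num) (left_mem_Icc.2 hxb.le)
    have h2 := aux_iter f hUo hf hxb hsub (k := 2) (by norm_num) (left_mem_Icc.2 hxb.le)
    have h3 := aux_iter f hUo hf hxb hsub (k := 3) (by norm_num) (left_mem_Icc.2 hxb.le)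
    simp only [Finset.sum_range_succ, Finset.sum_range_zero, h0, h1, h2, h3, smul_eq_mul,
      P3, iteratedDeriv_zero]
    norm_num [Nat.factorial]
    ring
  have := hC ξ hξ
  rw [Real.norm_eq_abs, ht] at this
  refine this.trans ?_
  rw [show 3 + 1 = 4 from rfl]
  exact mul_le_mul_of_nonneg_right (le_max_left C 0) (by positivity)

lemma aux_taylor (f : ℝ → ℝ) {U : Set ℝ} (hUo : IsOpen U) (hf : ContDiffOn ℝ 4 f U)
    {x δ : ℝ} (hδ : 0 < δ) (hsub : Set.Icc (x - δ) (x + δ) ⊆ U) :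
    ∃ M, 0 ≤ M ∧ ∀ ξ ∈ Set.Icc (x - δ) (x + δ), |f ξ - P3 f x ξ| ≤ M * (ξ - x) ^ 4 := by
  have hxb : x < x + δ := by linarith
  obtain ⟨M₁, hM₁0, hM₁⟩ := aux_taylor_right f hUo hf hxb
    (fun t ht => hsub ⟨by linarith [ht.1], ht.2⟩)
  -- reflected function
  set g : ℝ → ℝ := fun t => f (2 * x - t) with hg
  set V : Set ℝ := (fun t : ℝ => 2 * x - t) ⁻¹' U with hV
  have hVo : IsOpen V := hUo.preimage (by continuity)
  have hgcd : ContDiffOn ℝ 4 g V :=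
    hf.comp ((contDiff_const.sub contDiff_id).contDiffOn) (fun t ht => ht)
  have hsubV : Set.Icc x (x + δ) ⊆ V := by
    intro t ht
    simp only [Set.mem_Icc] at ht
    show 2 * x - t ∈ U
    exact hsub (Set.mem_Icc.mpr ⟨by linarith, by linarith⟩)
  obtain ⟨M₂, hM₂0, hM₂⟩ := aux_taylor_right g hVo hgcd hxb hsubV
  -- iterated derivs of g
  have hgk : ∀ n : ℕ, ∀ a : ℝ, iteratedDeriv n g a = (-1 : ℝ) ^ n * iteratedDeriv n f (2 * x - a) := by
    intro n a
    have e1 := iteratedDeriv_comp_neg n (fun z => f (2 * x + z)) a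
    have e2 := iteratedDeriv_comp_const_add n f (2 * x)
    calc iteratedDeriv n g a = iteratedDeriv n (fun t : ℝ => f (2 * x + -t)) a := by
          simp only [hg, sub_eq_add_neg]
      _ = (-1 : ℝ) ^ n • iteratedDeriv n (fun z => f (2 * x + z)) (-a) := e1
      _ = (-1 : ℝ) ^ n * iteratedDeriv n f (2 * x + -a) := by rw [e2]; simp [smul_eq_mul]
      _ = (-1 : ℝ) ^ n * iteratedDeriv n f (2 * x - a) := by rw [sub_eq_add_neg]
  have hP3g : ∀ t : ℝ, P3 g x t = P3 f x (2 * x - t) := by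
    intro t
    simp only [P3, hgk]
    simp only [hg]
    ring_nf
  refine ⟨max M₁ M₂, le_max_of_le_left hM₁0, fun ξ hξ => ?_⟩
  rcases le_or_gt x ξ with hc | hc
  · exact (hM₁ ξ ⟨hc, hξ.2⟩).trans
      (mul_le_mul_of_nonneg_right (le_max_left _ _) (by positivity))
  · have ht : 2 * x - ξ ∈ Set.Icc x (x + δ) := ⟨by linarith, by linarith [hξ.1]⟩
    have := hM₂ (2 * x - ξ) ht
    rw [hP3g] at this
    have he1 : g (2 * x - ξ) = f ξ := by show f (2 * x - (2 * x - ξ)) = f ξ; norm_num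
    have he2 : (2 * x - ξ) - x = -(ξ - x) := by ring
    have h4 : (-(ξ - x) : ℝ) ^ 4 = (ξ - x) ^ 4 := by ring
    rw [he1, show 2 * x - (2 * x - ξ) = ξ by ring, he2, h4] at this
    exact this.trans (mul_le_mul_of_nonneg_right (le_max_right _ _) (by positivity))

lemma aux_intP3 (f : ℝ → ℝ) (x u v : ℝ) :
    ∫ ξ in u..v, P3 f x ξ =
      f x * (v - u) + iteratedDeriv 1 f x * ((v - x) ^ 2 - (u - x) ^ 2) / 2
        + iteratedDeriv 2 f x * ((v - x) ^ 3 - (u - x) ^ 3) / 6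
        + iteratedDeriv 3 f x * ((v - x) ^ 4 - (u - x) ^ 4) / 24 := by
  have hF : ∀ ξ : ℝ, HasDerivAt
      (fun ξ => f x * ξ + iteratedDeriv 1 f x / 2 * (ξ - x) ^ 2
        + (iteratedDeriv 2 f x / 6 * (ξ - x) ^ 3 + iteratedDeriv 3 f x / 24 * (ξ - x) ^ 4))
      (P3 f x ξ) ξ := by
    intro ξ
    have hid : HasDerivAt (fun ξ : ℝ => ξ - x) 1 ξ := (hasDerivAt_id ξ).sub_const x
    have h := (((hasDerivAt_id ξ).const_mul (f x)).add
        ((hid.pow 2).const_mul (iteratedDeriv 1 f x / 2))).add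
      (((hid.pow 3).const_mul (iteratedDeriv 2 f x / 6)).add
        ((hid.pow 4).const_mul (iteratedDeriv 3 f x / 24)))
    exact h.congr_deriv (by simp only [P3]; push_cast; ring)
  rw [intervalIntegral.integral_eq_sub_of_hasDerivAt (fun ξ _ => hF ξ)
    ((P3_continuous f x).intervalIntegrable u v)]
  ring


set_option maxHeartbeats 4000000 in
/-- The data-driven adaptive k = 2 MQ-RBF reconstruction, with
`η(Δx) = 2(−h̄₋ + 2h̄₀ − h̄₊)/(−h̄₋ + 5h̄₀ + 2h̄₊)`, is third-order accurate with
explicit leading term `(1/12)h'(x)Δx³`. -/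
theorem stmt_12 (h : ℝ → ℝ) (x : ℝ) (hh : ContDiffAt ℝ 4 h x) (hx : h x ≠ 0) :
    ∃ C > 0, ∃ d₀ > 0, ∀ d : ℝ, 0 < d → d < d₀ →
      -((1 / d) * ∫ ξ in (x - 2 * d)..(x - d), h ξ)
          + 5 * ((1 / d) * ∫ ξ in (x - d)..x, h ξ)
          + 2 * ((1 / d) * ∫ ξ in x..(x + d), h ξ) ≠ 0 ∧
      |(1 / 2
            + 2 * (-((1 / d) * ∫ ξ in (x - 2 * d)..(x - d), h ξ)
                  + 2 * ((1 / d) * ∫ ξ in (x - d)..x, h ξ)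
                  - (1 / d) * ∫ ξ in x..(x + d), h ξ)
                / (-((1 / d) * ∫ ξ in (x - 2 * d)..(x - d), h ξ)
                  + 5 * ((1 / d) * ∫ ξ in (x - d)..x, h ξ)
                  + 2 * ((1 / d) * ∫ ξ in x..(x + d), h ξ)) / 4)
            * ((1 / d) * (∫ ξ in (x - d)..x, h ξ) + (1 / d) * ∫ ξ in x..(x + d), h ξ)
          - h x - (1 / 12) * iteratedDeriv 3 h x * d ^ 3|
        ≤ C * d ^ 4 := by
  set i₁ := iteratedDeriv 1 h x with hi1
  set i₂ := iteratedDeriv 2 h x with hi2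
  set i₃ := iteratedDeriv 3 h x with hi3
  -- open set where h is C⁴
  obtain ⟨u, hu, hcd⟩ := hh.contDiffOn (le_refl 4) (by simp)
  have hUo : IsOpen (interior u) := isOpen_interior
  have hxU : x ∈ interior u := mem_interior_iff_mem_nhds.2 hu
  have hU : ContDiffOn ℝ 4 h (interior u) := hcd.mono interior_subset
  -- δ with Icc (x-δ) (x+δ) ⊆ interior u
  obtain ⟨ε, hε0, hball⟩ := Metric.isOpen_iff.1 hUo x hxU
  set δ := ε / 2 with hδdef
  have hδ0 : 0 < δ := by positivity
  have hsub : Set.Icc (x - δ) (x + δ) ⊆ interior u := by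
    intro y hy
    apply hball
    rw [Metric.mem_ball, Real.dist_eq]
    rw [Set.mem_Icc] at hy
    have h1 : |y - x| ≤ δ := abs_le.mpr ⟨by linarith [hy.1], by linarith [hy.2]⟩
    rw [hδdef] at h1; linarith
  obtain ⟨M, hM0, hM⟩ := aux_taylor h hUo hU hδ0 hsub
  have hcont : ContinuousOn h (Set.Icc (x - δ) (x + δ)) := hU.continuousOn.mono hsub
  set M₁ : ℝ := 16 * M with hM₁def
  have hM₁0 : 0 ≤ M₁ := by positivity
  set K : ℝ := 2 * M₁ * (6 * |h x| + |i₃| + |i₂| + 12 * M₁)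
      + 8 * M₁ * ((1/3) * |i₂| + (1/6) * |i₃|)
      + 4 * M₁ * (2 * |h x| + (1/3) * |i₂|)
      + ((1/3) * |i₂| * |i₃| + (1/3) * i₂ ^ 2 + (1/12) * i₃ ^ 2) with hKdef
  have hK0 : 0 ≤ K := by positivity
  have hhx : 0 < |h x| := abs_pos.mpr hx
  refine ⟨K / (6 * |h x|) + 1, by positivity, min (δ / 2) (min 1 (3 * |h x| / ((1/2) * |i₃| + 8 * M₁ + 1))), by positivity, fun d hd0 hdd => ?_⟩
  have hd1 : d ≤ 1 := le_of_lt (lt_of_lt_of_le hdd ((min_le_right _ _).trans (min_le_left _ _)))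
  have hdδ : 2 * d ≤ δ := by
    have := lt_of_lt_of_le hdd (min_le_left _ _); linarith
  have hdq : d * ((1/2) * |i₃| + 8 * M₁ + 1) ≤ 3 * |h x| := by
    have h1 := lt_of_lt_of_le hdd ((min_le_right _ _).trans (min_le_right _ _))
    have h2 : 0 < (1/2) * |i₃| + 8 * M₁ + 1 := by positivity
    exact ((lt_div_iff₀ h2).1 h1).le
  have hd3 : d ^ 3 ≤ d := by
    calc d ^ 3 ≤ d ^ 1 := pow_le_pow_of_le_one hd0.le hd1 (by norm_num)
      _ = d := pow_one d
  have hd4 : d ^ 4 ≤ d := by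
    calc d ^ 4 ≤ d ^ 1 := pow_le_pow_of_le_one hd0.le hd1 (by norm_num)
      _ = d := pow_one d
  have hd41 : d ^ 4 ≤ 1 := pow_le_one₀ hd0.le hd1
  have hd31 : d ^ 3 ≤ 1 := pow_le_one₀ hd0.le hd1
  have hd21 : d ^ 2 ≤ 1 := pow_le_one₀ hd0.le hd1
  -- average error estimate
  have havg : ∀ u v : ℝ, x - 2 * d ≤ u → v ≤ x + d → v - u = d →
      |(1 / d) * (∫ ξ in u..v, h ξ) - (1 / d) * ∫ ξ in u..v, P3 h x ξ| ≤ M₁ * d ^ 4 := by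
    intro u v h1 h2 h3
    have huv : u ≤ v := by linarith
    have hsub2 : Set.Icc u v ⊆ Set.Icc (x - δ) (x + δ) :=
      Set.Icc_subset_Icc (by linarith) (by linarith)
    have hih : IntervalIntegrable h MeasureTheory.volume u v :=
      (hcont.mono (by rw [Set.uIcc_of_le huv]; exact hsub2)).intervalIntegrable
    have hiP := (P3_continuous h x).intervalIntegrable (μ := MeasureTheory.volume) u v
    rw [← mul_sub, ← intervalIntegral.integral_sub hih hiP, abs_mul]
    have hb : ∀ t ∈ Set.uIoc u v, ‖h t - P3 h x t‖ ≤ M * (2 * d) ^ 4 := by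
      intro t ht
      rw [Set.uIoc_of_le huv] at ht
      have h5 : |h t - P3 h x t| ≤ M * (t - x) ^ 4 :=
        hM t (hsub2 ⟨ht.1.le, ht.2⟩)
      refine h5.trans (mul_le_mul_of_nonneg_left ?_ hM0)
      have habs : |t - x| ≤ 2 * d := abs_le.mpr ⟨by linarith [ht.1], by linarith [ht.2]⟩
      calc (t - x) ^ 4 ≤ |t - x| ^ 4 := by rw [← abs_pow]; exact le_abs_self _
        _ ≤ (2 * d) ^ 4 := pow_le_pow_left₀ (abs_nonneg _) habs 4
    have hni := intervalIntegral.norm_integral_le_of_norm_le_const hb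
    rw [Real.norm_eq_abs] at hni
    calc |1 / d| * |∫ ξ in u..v, (h ξ - P3 h x ξ)| ≤ |1 / d| * (M * (2 * d) ^ 4 * |v - u|) :=
          mul_le_mul_of_nonneg_left hni (abs_nonneg _)
      _ = M₁ * d ^ 4 := by
          rw [h3, abs_of_pos hd0, abs_of_pos (by positivity : (0:ℝ) < 1 / d), hM₁def]
          field_simp
          ring
  -- the three cell averages
  set Ia := (1 / d) * ∫ ξ in (x - 2 * d)..(x - d), h ξ with hIadef
  set Ib := (1 / d) * ∫ ξ in (x - d)..x, h ξ with hIbdef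
  set Ic := (1 / d) * ∫ ξ in x..(x + d), h ξ with hIcdef
  have hPA : (1 / d) * ∫ ξ in (x - 2 * d)..(x - d), P3 h x ξ
      = h x - (3/2) * i₁ * d + (7/6) * i₂ * d ^ 2 - (5/8) * i₃ * d ^ 3 := by
    rw [aux_intP3, ← hi1, ← hi2, ← hi3]
    field_simp
    ring
  have hPB : (1 / d) * ∫ ξ in (x - d)..x, P3 h x ξ
      = h x - (1/2) * i₁ * d + (1/6) * i₂ * d ^ 2 - (1/24) * i₃ * d ^ 3 := by
    rw [aux_intP3, ← hi1, ← hi2, ← hi3]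
    field_simp
    ring
  have hPC : (1 / d) * ∫ ξ in x..(x + d), P3 h x ξ
      = h x + (1/2) * i₁ * d + (1/6) * i₂ * d ^ 2 + (1/24) * i₃ * d ^ 3 := by
    rw [aux_intP3, ← hi1, ← hi2, ← hi3]
    field_simp
    ring
  set rA := Ia - (h x - (3/2) * i₁ * d + (7/6) * i₂ * d ^ 2 - (5/8) * i₃ * d ^ 3) with hrAdef
  set rB := Ib - (h x - (1/2) * i₁ * d + (1/6) * i₂ * d ^ 2 - (1/24) * i₃ * d ^ 3) with hrBdef
  set rC := Ic - (h x + (1/2) * i₁ * d + (1/6) * i₂ * d ^ 2 + (1/24) * i₃ * d ^ 3) with hrCdef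
  have hrA : |rA| ≤ M₁ * d ^ 4 := by
    rw [hrAdef, ← hPA]
    exact havg (x - 2 * d) (x - d) (by linarith) (by linarith) (by ring)
  have hrB : |rB| ≤ M₁ * d ^ 4 := by
    rw [hrBdef, ← hPB]
    exact havg (x - d) x (by linarith) (by linarith) (by ring)
  have hrC : |rC| ≤ M₁ * d ^ 4 := by
    rw [hrCdef, ← hPC]
    exact havg x (x + d) (by linarith) (by linarith) (by ring)
  have hIaeq : Ia = h x - (3/2) * i₁ * d + (7/6) * i₂ * d ^ 2 - (5/8) * i₃ * d ^ 3 + rA := by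
    rw [hrAdef]; ring
  have hIbeq : Ib = h x - (1/2) * i₁ * d + (1/6) * i₂ * d ^ 2 - (1/24) * i₃ * d ^ 3 + rB := by
    rw [hrBdef]; ring
  have hIceq : Ic = h x + (1/2) * i₁ * d + (1/6) * i₂ * d ^ 2 + (1/24) * i₃ * d ^ 3 + rC := by
    rw [hrCdef]; ring
  -- combined errors
  have hrDb : |(-rA + 5 * rB + 2 * rC)| ≤ 8 * M₁ * d ^ 4 := by
    have t1 := abs_add_le (-rA + 5 * rB) (2 * rC)
    have t2 := abs_add_le (-rA) (5 * rB)
    rw [abs_neg] at t2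
    have t3 : |5 * rB| = 5 * |rB| := by rw [abs_mul]; norm_num
    have t4 : |2 * rC| = 2 * |rC| := by rw [abs_mul]; norm_num
    linarith
  have hrNb : |(-rA + 2 * rB - rC)| ≤ 4 * M₁ * d ^ 4 := by
    have t1 := abs_sub (-rA + 2 * rB) rC
    have t2 := abs_add_le (-rA) (2 * rB)
    rw [abs_neg] at t2
    have t3 : |2 * rB| = 2 * |rB| := by rw [abs_mul]; norm_num
    linarith
  have hrSb : |(rB + rC)| ≤ 2 * M₁ * d ^ 4 := by
    have t1 := abs_add_le rB rC
    linarith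
  -- denominator
  have hDeq : -Ia + 5 * Ib + 2 * Ic
      = 6 * h x + ((1/2) * i₃ * d ^ 3 + (-rA + 5 * rB + 2 * rC)) := by
    rw [hIaeq, hIbeq, hIceq]; ring
  have hpert : |(1/2) * i₃ * d ^ 3 + (-rA + 5 * rB + 2 * rC)| ≤ 3 * |h x| := by
    have e1 : |(1/2) * i₃ * d ^ 3| = (1/2) * |i₃| * d ^ 3 := by
      rw [abs_mul, abs_mul, abs_pow, abs_of_pos hd0]; norm_num
    have t1 := abs_add_le ((1/2) * i₃ * d ^ 3) (-rA + 5 * rB + 2 * rC)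
    rw [e1] at t1
    have e2 : (1/2) * |i₃| * d ^ 3 ≤ (1/2) * |i₃| * d :=
      mul_le_mul_of_nonneg_left hd3 (by positivity)
    have e3 : 8 * M₁ * d ^ 4 ≤ 8 * M₁ * d := mul_le_mul_of_nonneg_left hd4 (by positivity)
    have hdq' : (1/2) * |i₃| * d + 8 * M₁ * d + d ≤ 3 * |h x| := by
      have er : d * ((1/2) * |i₃| + 8 * M₁ + 1) = (1/2) * |i₃| * d + 8 * M₁ * d + d := by ring
      linarith [er ▸ hdq]
    linarith
  have hDlb : 3 * |h x| ≤ |(-Ia + 5 * Ib + 2 * Ic)| := by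
    rw [hDeq]
    have t1 := abs_add_le (6 * h x + ((1/2) * i₃ * d ^ 3 + (-rA + 5 * rB + 2 * rC)))
      (-((1/2) * i₃ * d ^ 3 + (-rA + 5 * rB + 2 * rC)))
    rw [abs_neg] at t1
    have e1 : |6 * h x| = 6 * |h x| := by rw [abs_mul]; norm_num
    have e2 : 6 * h x + ((1/2) * i₃ * d ^ 3 + (-rA + 5 * rB + 2 * rC))
        + -((1/2) * i₃ * d ^ 3 + (-rA + 5 * rB + 2 * rC)) = 6 * h x := by ring
    rw [e2, e1] at t1
    linarith
  have hDne : -Ia + 5 * Ib + 2 * Ic ≠ 0 := by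
    intro h0
    rw [h0, abs_zero] at hDlb
    linarith
  refine ⟨hDne, ?_⟩
  clear_value i₁ i₂ i₃ δ M₁ K Ia Ib Ic rA rB rC
  -- main estimate
  have hkeygen : ∀ EE DD R2 : ℝ, EE * (2 * DD) = R2 → |R2| ≤ K * d ^ 4 →
      3 * |h x| ≤ |DD| → |EE| ≤ K / (6 * |h x|) * d ^ 4 := by
    intro EE DD R2 heq hR2 hDD
    have h6 : |EE| * (6 * |h x|) ≤ K * d ^ 4 := by
      calc |EE| * (6 * |h x|) ≤ |EE| * (2 * |DD|) :=
            mul_le_mul_of_nonneg_left (by linarith) (abs_nonneg _)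
        _ = |EE * (2 * DD)| := by rw [abs_mul, abs_mul, abs_two]
        _ = |R2| := by rw [heq]
        _ ≤ K * d ^ 4 := hR2
    have h7 : |EE| ≤ K * d ^ 4 / (6 * |h x|) :=
      (le_div_iff₀ (by positivity : (0:ℝ) < 6 * |h x|)).mpr h6
    calc |EE| ≤ K * d ^ 4 / (6 * |h x|) := h7
      _ = K / (6 * |h x|) * d ^ 4 := by ring
  have hE1 : ((1 / 2 + 2 * (-Ia + 2 * Ib - Ic) / (-Ia + 5 * Ib + 2 * Ic) / 4) * (Ib + Ic)
        - h x - 1 / 12 * i₃ * d ^ 3) * (2 * (-Ia + 5 * Ib + 2 * Ic))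
      = (-Ia + 5 * Ib + 2 * Ic) * (Ib + Ic) + (-Ia + 2 * Ib - Ic) * (Ib + Ic)
        - 2 * h x * (-Ia + 5 * Ib + 2 * Ic) - (1/6) * i₃ * d ^ 3 * (-Ia + 5 * Ib + 2 * Ic) := by
    have key : (-Ia + 5 * Ib + 2 * Ic) * (-Ia + 5 * Ib + 2 * Ic)⁻¹ = 1 := mul_inv_cancel₀ hDne
    linear_combination (-Ia + 2 * Ib - Ic) * (Ib + Ic) * key
  have hE2 : (-Ia + 5 * Ib + 2 * Ic) * (Ib + Ic) + (-Ia + 2 * Ib - Ic) * (Ib + Ic)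
        - 2 * h x * (-Ia + 5 * Ib + 2 * Ic) - (1/6) * i₃ * d ^ 3 * (-Ia + 5 * Ib + 2 * Ic)
      = (rB + rC) * (6 * h x + i₃ * d ^ 3 - i₂ * d ^ 2 + (-rA + 5 * rB + 2 * rC)
            + (-rA + 2 * rB - rC))
        + (-rA + 5 * rB + 2 * rC) * ((1/3) * i₂ * d ^ 2 - (1/6) * i₃ * d ^ 3)
        + (-rA + 2 * rB - rC) * (2 * h x + (1/3) * i₂ * d ^ 2)
        + ((1/3) * i₂ * i₃ * d ^ 5 - (1/3) * i₂ ^ 2 * d ^ 4 - (1/12) * i₃ ^ 2 * d ^ 6) := by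
    rw [hIaeq, hIbeq, hIceq]
    ring
  -- bracket bounds
  have p2 : |i₃ * d ^ 3| ≤ |i₃| := by
    rw [abs_mul, abs_pow, abs_of_pos hd0]
    exact mul_le_of_le_one_right (abs_nonneg _) hd31
  have p3 : |i₂ * d ^ 2| ≤ |i₂| := by
    rw [abs_mul, abs_pow, abs_of_pos hd0]
    exact mul_le_of_le_one_right (abs_nonneg _) hd21
  have p4 : |(-rA + 5 * rB + 2 * rC)| ≤ 8 * M₁ :=
    hrDb.trans (mul_le_of_le_one_right (by positivity) hd41)
  have p5 : |(-rA + 2 * rB - rC)| ≤ 4 * M₁ :=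
    hrNb.trans (mul_le_of_le_one_right (by positivity) hd41)
  have q1 : |(1/3) * i₂ * d ^ 2| ≤ (1/3) * |i₂| := by
    have e : |(1/3) * i₂ * d ^ 2| = (1/3) * |i₂| * d ^ 2 := by
      rw [abs_mul, abs_mul, abs_pow, abs_of_pos hd0]; norm_num
    rw [e]
    exact mul_le_of_le_one_right (by positivity) hd21
  have q2 : |(1/6) * i₃ * d ^ 3| ≤ (1/6) * |i₃| := by
    have e : |(1/6) * i₃ * d ^ 3| = (1/6) * |i₃| * d ^ 3 := by
      rw [abs_mul, abs_mul, abs_pow, abs_of_pos hd0]; norm_num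
    rw [e]
    exact mul_le_of_le_one_right (by positivity) hd31
  have hbr1 : |6 * h x + i₃ * d ^ 3 - i₂ * d ^ 2 + (-rA + 5 * rB + 2 * rC)
        + (-rA + 2 * rB - rC)| ≤ 6 * |h x| + |i₃| + |i₂| + 12 * M₁ := by
    have p1 : |(6:ℝ) * h x| = 6 * |h x| := by rw [abs_mul]; norm_num
    have t1 := abs_add_le (6 * h x + i₃ * d ^ 3 - i₂ * d ^ 2 + (-rA + 5 * rB + 2 * rC))
      (-rA + 2 * rB - rC)
    have t2 := abs_add_le (6 * h x + i₃ * d ^ 3 - i₂ * d ^ 2) (-rA + 5 * rB + 2 * rC)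
    have t3 := abs_sub (6 * h x + i₃ * d ^ 3) (i₂ * d ^ 2)
    have t4 := abs_add_le (6 * h x) (i₃ * d ^ 3)
    linarith
  have hbr2 : |(1/3) * i₂ * d ^ 2 - (1/6) * i₃ * d ^ 3| ≤ (1/3) * |i₂| + (1/6) * |i₃| := by
    have t1 := abs_sub ((1/3) * i₂ * d ^ 2) ((1/6) * i₃ * d ^ 3)
    linarith
  have hbr3 : |2 * h x + (1/3) * i₂ * d ^ 2| ≤ 2 * |h x| + (1/3) * |i₂| := by
    have p1 : |(2:ℝ) * h x| = 2 * |h x| := by rw [abs_mul]; norm_num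
    have t1 := abs_add_le (2 * h x) ((1/3) * i₂ * d ^ 2)
    linarith
  have g1 : |(rB + rC) * (6 * h x + i₃ * d ^ 3 - i₂ * d ^ 2 + (-rA + 5 * rB + 2 * rC)
        + (-rA + 2 * rB - rC))|
      ≤ 2 * M₁ * d ^ 4 * (6 * |h x| + |i₃| + |i₂| + 12 * M₁) := by
    rw [abs_mul]
    exact mul_le_mul hrSb hbr1 (abs_nonneg _) (by positivity)
  have g2 : |(-rA + 5 * rB + 2 * rC) * ((1/3) * i₂ * d ^ 2 - (1/6) * i₃ * d ^ 3)|
      ≤ 8 * M₁ * d ^ 4 * ((1/3) * |i₂| + (1/6) * |i₃|) := by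
    rw [abs_mul]
    exact mul_le_mul hrDb hbr2 (abs_nonneg _) (by positivity)
  have g3 : |(-rA + 2 * rB - rC) * (2 * h x + (1/3) * i₂ * d ^ 2)|
      ≤ 4 * M₁ * d ^ 4 * (2 * |h x| + (1/3) * |i₂|) := by
    rw [abs_mul]
    exact mul_le_mul hrNb hbr3 (abs_nonneg _) (by positivity)
  have g4 : |(1/3) * i₂ * i₃ * d ^ 5 - (1/3) * i₂ ^ 2 * d ^ 4 - (1/12) * i₃ ^ 2 * d ^ 6|
      ≤ ((1/3) * |i₂| * |i₃| + (1/3) * i₂ ^ 2 + (1/12) * i₃ ^ 2) * d ^ 4 := by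
    have q41 : |(1/3) * i₂ * i₃ * d ^ 5| = (1/3) * |i₂| * |i₃| * d ^ 5 := by
      rw [abs_mul, abs_mul, abs_mul, abs_pow, abs_of_pos hd0]; norm_num
    have q42 : |(1/3) * i₂ ^ 2 * d ^ 4| = (1/3) * i₂ ^ 2 * d ^ 4 :=
      abs_of_nonneg (by positivity)
    have q43 : |(1/12) * i₃ ^ 2 * d ^ 6| = (1/12) * i₃ ^ 2 * d ^ 6 :=
      abs_of_nonneg (by positivity)
    have hd54 : d ^ 5 ≤ d ^ 4 := pow_le_pow_of_le_one hd0.le hd1 (by norm_num)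
    have hd64 : d ^ 6 ≤ d ^ 4 := pow_le_pow_of_le_one hd0.le hd1 (by norm_num)
    have e5 : (1/3) * |i₂| * |i₃| * d ^ 5 ≤ (1/3) * |i₂| * |i₃| * d ^ 4 :=
      mul_le_mul_of_nonneg_left hd54 (by positivity)
    have e6 : (1/12) * i₃ ^ 2 * d ^ 6 ≤ (1/12) * i₃ ^ 2 * d ^ 4 :=
      mul_le_mul_of_nonneg_left hd64 (by positivity)
    have t1 := abs_sub ((1/3) * i₂ * i₃ * d ^ 5 - (1/3) * i₂ ^ 2 * d ^ 4)
      ((1/12) * i₃ ^ 2 * d ^ 6)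
    have t2 := abs_sub ((1/3) * i₂ * i₃ * d ^ 5) ((1/3) * i₂ ^ 2 * d ^ 4)
    have er : ((1/3) * |i₂| * |i₃| + (1/3) * i₂ ^ 2 + (1/12) * i₃ ^ 2) * d ^ 4
        = (1/3) * |i₂| * |i₃| * d ^ 4 + (1/3) * i₂ ^ 2 * d ^ 4 + (1/12) * i₃ ^ 2 * d ^ 4 := by
      ring
    linarith
  have hRb : |(rB + rC) * (6 * h x + i₃ * d ^ 3 - i₂ * d ^ 2 + (-rA + 5 * rB + 2 * rC)
            + (-rA + 2 * rB - rC))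
        + (-rA + 5 * rB + 2 * rC) * ((1/3) * i₂ * d ^ 2 - (1/6) * i₃ * d ^ 3)
        + (-rA + 2 * rB - rC) * (2 * h x + (1/3) * i₂ * d ^ 2)
        + ((1/3) * i₂ * i₃ * d ^ 5 - (1/3) * i₂ ^ 2 * d ^ 4 - (1/12) * i₃ ^ 2 * d ^ 6)|
      ≤ K * d ^ 4 := by
    have t1 := abs_add_le
      ((rB + rC) * (6 * h x + i₃ * d ^ 3 - i₂ * d ^ 2 + (-rA + 5 * rB + 2 * rC)
          + (-rA + 2 * rB - rC))
        + (-rA + 5 * rB + 2 * rC) * ((1/3) * i₂ * d ^ 2 - (1/6) * i₃ * d ^ 3)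
        + (-rA + 2 * rB - rC) * (2 * h x + (1/3) * i₂ * d ^ 2))
      ((1/3) * i₂ * i₃ * d ^ 5 - (1/3) * i₂ ^ 2 * d ^ 4 - (1/12) * i₃ ^ 2 * d ^ 6)
    have t2 := abs_add_le
      ((rB + rC) * (6 * h x + i₃ * d ^ 3 - i₂ * d ^ 2 + (-rA + 5 * rB + 2 * rC)
          + (-rA + 2 * rB - rC))
        + (-rA + 5 * rB + 2 * rC) * ((1/3) * i₂ * d ^ 2 - (1/6) * i₃ * d ^ 3))
      ((-rA + 2 * rB - rC) * (2 * h x + (1/3) * i₂ * d ^ 2))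
    have t3 := abs_add_le
      ((rB + rC) * (6 * h x + i₃ * d ^ 3 - i₂ * d ^ 2 + (-rA + 5 * rB + 2 * rC)
          + (-rA + 2 * rB - rC)))
      ((-rA + 5 * rB + 2 * rC) * ((1/3) * i₂ * d ^ 2 - (1/6) * i₃ * d ^ 3))
    have er2 : 2 * M₁ * d ^ 4 * (6 * |h x| + |i₃| + |i₂| + 12 * M₁)
        + 8 * M₁ * d ^ 4 * ((1/3) * |i₂| + (1/6) * |i₃|)
        + 4 * M₁ * d ^ 4 * (2 * |h x| + (1/3) * |i₂|)
        + ((1/3) * |i₂| * |i₃| + (1/3) * i₂ ^ 2 + (1/12) * i₃ ^ 2) * d ^ 4 = K * d ^ 4 := by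
      rw [hKdef]; ring
    linarith
  have hfin := hkeygen _ _ _ (hE1.trans hE2) hRb hDlb
  refine hfin.trans ?_
  exact mul_le_mul_of_nonneg_right (le_add_of_nonneg_right zero_le_one) (by positivity)
end

section
/- Let h : ℝ → ℝ be four times continuously differentiable in a neighborhood of x ∈ ℝ with h'(x) ≠ 0, and set s = −(1/12)·h'''(x)/h'(x) and η = s·Δx². Then the adaptive k = 3 MQ-RBF reconstruction is fourth-order accurate: there exist C, Δx₀ > 0 such that |(−1/6 − η/6)·h̄₋ + (5/6 − (2/3)·η)·h̄₀ + (1/3 + (5/6)·η)·h̄₊ − h(x)| ≤ C·Δx⁴ for all 0 < Δx < Δx₀. -/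
open Set Metric intervalIntegral MeasureTheory

private lemma iterDW_open {f : ℝ → ℝ} {s : Set ℝ} (n : ℕ) (hs : IsOpen s)
    {ξ : ℝ} (hξ : ξ ∈ s) : iteratedDerivWithin n f s ξ = iteratedDeriv n f ξ := by
  simp only [iteratedDerivWithin, iteratedDeriv, iteratedFDerivWithin_of_isOpen n hs hξ]

private lemma hasDerivAt_iterD {f : ℝ → ℝ} {u : Set ℝ} (hu : IsOpen u)
    (hf : ContDiffOn ℝ 4 f u) {m : ℕ} (hm : (m : WithTop ℕ∞) < 4) {ξ : ℝ} (hξ : ξ ∈ u) :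
    HasDerivAt (iteratedDeriv m f) (iteratedDeriv (m + 1) f ξ) ξ := by
  have hdiff : DifferentiableOn ℝ (iteratedDerivWithin m f u) u :=
    hf.differentiableOn_iteratedDerivWithin hm hu.uniqueDiffOn
  have heq : iteratedDerivWithin m f u =ᶠ[nhds ξ] iteratedDeriv m f :=
    Filter.eventuallyEq_of_mem (hu.mem_nhds hξ) (fun y hy => iterDW_open m hu hy)
  have h1 : DifferentiableAt ℝ (iteratedDeriv m f) ξ :=
    (((hdiff ξ hξ).differentiableAt (hu.mem_nhds hξ))).congr_of_eventuallyEq heq.symm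
  rw [iteratedDeriv_succ]
  exact h1.hasDerivAt

private lemma mvt_pow {f f' : ℝ → ℝ} {x r : ℝ} {k : ℕ}
    (hf : ∀ ξ ∈ ball x r, HasDerivAt f (f' ξ) ξ)
    (hb : ∀ ξ ∈ ball x r, |f' ξ| ≤ |ξ - x| ^ k)
    (hfx : f x = 0) :
    ∀ ξ ∈ ball x r, |f ξ| ≤ |ξ - x| ^ (k + 1) := by
  intro ξ hξ
  have hξr : |ξ - x| < r := by rwa [mem_ball, Real.dist_eq] at hξ
  have hsub : uIcc x ξ ⊆ ball x r := by
    intro c hc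
    rw [mem_ball, Real.dist_eq]
    exact lt_of_le_of_lt (abs_sub_left_of_mem_uIcc hc) hξr
  have key := (convex_uIcc x ξ).norm_image_sub_le_of_norm_hasDerivWithin_le
      (f' := f') (C := |ξ - x| ^ k)
      (fun c hc => (hf c (hsub hc)).hasDerivWithinAt)
      (fun c hc => le_trans (hb c (hsub hc))
        (pow_le_pow_left₀ (abs_nonneg _) (abs_sub_left_of_mem_uIcc hc) k))
      left_mem_uIcc right_mem_uIcc
  rw [hfx, sub_zero, Real.norm_eq_abs, Real.norm_eq_abs] at key
  calc |f ξ| ≤ |ξ - x| ^ k * |ξ - x| := key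
    _ = |ξ - x| ^ (k + 1) := (pow_succ _ _).symm

set_option maxHeartbeats 2000000 in
/-- With the adaptive shape parameter `s = −(1/12)h'''(x)/h'(x)` the k = 3
MQ-RBF reconstruction (central stencil) is fourth-order accurate. -/
theorem stmt_15 (h : ℝ → ℝ) (x : ℝ) (hh : ContDiffAt ℝ 4 h x)
    (hx : deriv h x ≠ 0) :
    ∃ C > 0, ∃ d₀ > 0, ∀ d : ℝ, 0 < d → d < d₀ →
      |(-(1 / 6) - (-(1 / 12) * iteratedDeriv 3 h x / deriv h x) * d ^ 2 / 6)
            * ((1 / d) * ∫ ξ in (x - 2 * d)..(x - d), h ξ)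
          + (5 / 6 - (2 / 3) * ((-(1 / 12) * iteratedDeriv 3 h x / deriv h x) * d ^ 2))
            * ((1 / d) * ∫ ξ in (x - d)..x, h ξ)
          + (1 / 3 + (5 / 6) * ((-(1 / 12) * iteratedDeriv 3 h x / deriv h x) * d ^ 2))
            * ((1 / d) * ∫ ξ in x..(x + d), h ξ)
          - h x|
        ≤ C * d ^ 4 := by
  set c1 := deriv h x with hc1
  set c2 := iteratedDeriv 2 h x with hc2
  set c3 := iteratedDeriv 3 h x with hc3
  set c4 := iteratedDeriv 4 h x with hc4
  set s : ℝ := -(1 / 12) * c3 / c1 with hs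
  -- neighborhood where h is C⁴
  obtain ⟨u0, hu0, hcd0⟩ := hh.contDiffOn le_rfl (by simp)
  obtain ⟨u, huu, huo, hxu⟩ := _root_.mem_nhds_iff.mp hu0
  have hcd : ContDiffOn ℝ 4 h u := hcd0.mono huu
  -- continuity of the 4th derivative at x
  have hc4c : ContinuousAt (iteratedDeriv 4 h) x := by
    have h0 := hcd.continuousOn_iteratedDerivWithin (m := 4) le_rfl huo.uniqueDiffOn
    have h1 : ContinuousAt (iteratedDerivWithin 4 h u) x := h0.continuousAt (huo.mem_nhds hxu)
    exact h1.congr (Filter.eventuallyEq_of_mem (huo.mem_nhds hxu)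
      (fun y hy => (iterDW_open 4 huo hy).symm)).symm
  -- the Taylor polynomial and its antiderivative
  set P : ℝ → ℝ := fun ξ => h x + c1 * (ξ - x) + c2 * (ξ - x) ^ 2 / 2 + c3 * (ξ - x) ^ 3 / 6
      + c4 * (ξ - x) ^ 4 / 24 with hP
  set F : ℝ → ℝ := fun ξ => h x * (ξ - x) + c1 * (ξ - x) ^ 2 / 2 + c2 * (ξ - x) ^ 3 / 6
      + c3 * (ξ - x) ^ 4 / 24 + c4 * (ξ - x) ^ 5 / 120 with hF
  have hFP : ∀ ξ : ℝ, HasDerivAt F (P ξ) ξ := by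
    intro ξ
    have hid : HasDerivAt (fun t : ℝ => t - x) 1 ξ := (hasDerivAt_id ξ).sub_const x
    have := (((((hid.const_mul (h x)).add (((hid.pow 2).const_mul c1).div_const 2)).add
        (((hid.pow 3).const_mul c2).div_const 6)).add
        (((hid.pow 4).const_mul c3).div_const 24)).add
        (((hid.pow 5).const_mul c4).div_const 120))
    convert this using 1
    · rfl
    · rfl
    · rw [hF]; funext t; simp only [Pi.add_apply, Pi.pow_apply]
    push_cast; ring
  -- remainder functions
  set G4 : ℝ → ℝ := fun ξ => iteratedDeriv 4 h ξ - c4 with hG4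
  set G3 : ℝ → ℝ := fun ξ => iteratedDeriv 3 h ξ - (c3 + c4 * (ξ - x)) with hG3
  set G2 : ℝ → ℝ := fun ξ => iteratedDeriv 2 h ξ
      - (c2 + c3 * (ξ - x) + c4 * (ξ - x) ^ 2 / 2) with hG2
  set G1 : ℝ → ℝ := fun ξ => deriv h ξ
      - (c1 + c2 * (ξ - x) + c3 * (ξ - x) ^ 2 / 2 + c4 * (ξ - x) ^ 3 / 6) with hG1
  set G0 : ℝ → ℝ := fun ξ => h ξ - P ξ with hG0
  -- radius where everything is controlled
  obtain ⟨ru, hru, hbu⟩ := Metric.mem_nhds_iff.mp (huo.mem_nhds hxu)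
  have hG4x : G4 x = 0 := by simp [hG4, hc4]
  have hsm : ∀ᶠ ξ in nhds x, G4 ξ ∈ Ioo (-1 : ℝ) 1 := by
    have hcont : ContinuousAt G4 x := hc4c.sub continuousAt_const
    exact hcont.eventually_mem (isOpen_Ioo.mem_nhds (by rw [hG4x]; constructor <;> norm_num))
  obtain ⟨r1, hr1, hball1⟩ := Metric.eventually_nhds_iff_ball.mp hsm
  set r : ℝ := min ru r1 with hrdef
  have hr : 0 < r := lt_min hru hr1
  have hbr : ball x r ⊆ u := (ball_subset_ball (min_le_left _ _)).trans hbu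
  have hbr1 : ball x r ⊆ ball x r1 := ball_subset_ball (min_le_right _ _)
  -- derivative chains on the ball
  have hD3 : ∀ ξ ∈ ball x r, HasDerivAt G3 (G4 ξ) ξ := by
    intro ξ hξ
    have hid : HasDerivAt (fun t : ℝ => t - x) 1 ξ := (hasDerivAt_id ξ).sub_const x
    have hp : HasDerivAt (fun t : ℝ => c3 + c4 * (t - x)) c4 ξ := by
      simpa using (hid.const_mul c4).const_add c3
    have hq := hasDerivAt_iterD huo hcd (m := 3) (by norm_num) (hbr hξ)
    exact hq.sub hp
  have hD2 : ∀ ξ ∈ ball x r, HasDerivAt G2 (G3 ξ) ξ := by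
    intro ξ hξ
    have hid : HasDerivAt (fun t : ℝ => t - x) 1 ξ := (hasDerivAt_id ξ).sub_const x
    have hp : HasDerivAt (fun t : ℝ => c2 + c3 * (t - x) + c4 * (t - x) ^ 2 / 2)
        (c3 + c4 * (ξ - x)) ξ := by
      have := ((hid.const_mul c3).const_add c2).add (((hid.pow 2).const_mul c4).div_const 2)
      convert this using 1
      · rfl
      · rfl
      · funext t; simp only [Pi.add_apply, Pi.pow_apply]
      push_cast; ring
    have hq := hasDerivAt_iterD huo hcd (m := 2) (by norm_num) (hbr hξ)
    exact hq.sub hp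
  have hD1 : ∀ ξ ∈ ball x r, HasDerivAt G1 (G2 ξ) ξ := by
    intro ξ hξ
    have hid : HasDerivAt (fun t : ℝ => t - x) 1 ξ := (hasDerivAt_id ξ).sub_const x
    have hp : HasDerivAt (fun t : ℝ => c1 + c2 * (t - x) + c3 * (t - x) ^ 2 / 2
        + c4 * (t - x) ^ 3 / 6) (c2 + c3 * (ξ - x) + c4 * (ξ - x) ^ 2 / 2) ξ := by
      have := (((hid.const_mul c2).const_add c1).add
          (((hid.pow 2).const_mul c3).div_const 2)).add (((hid.pow 3).const_mul c4).div_const 6)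
      convert this using 1
      · rfl
      · rfl
      · funext t; simp only [Pi.add_apply, Pi.pow_apply]
      push_cast; ring
    have hq := hasDerivAt_iterD huo hcd (m := 1) (by norm_num) (hbr hξ)
    rw [iteratedDeriv_one] at hq
    norm_num at hq
    exact hq.sub hp
  have hD0 : ∀ ξ ∈ ball x r, HasDerivAt G0 (G1 ξ) ξ := by
    intro ξ hξ
    have hid : HasDerivAt (fun t : ℝ => t - x) 1 ξ := (hasDerivAt_id ξ).sub_const x
    have hp : HasDerivAt P (c1 + c2 * (ξ - x) + c3 * (ξ - x) ^ 2 / 2 + c4 * (ξ - x) ^ 3 / 6) ξ := by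
      rw [hP]
      have := ((((hid.const_mul c1).const_add (h x)).add
          (((hid.pow 2).const_mul c2).div_const 2)).add
          (((hid.pow 3).const_mul c3).div_const 6)).add (((hid.pow 4).const_mul c4).div_const 24)
      convert this using 1
      · rfl
      · rfl
      · funext t; simp only [Pi.add_apply, Pi.pow_apply]
      push_cast; ring
    have hq := hasDerivAt_iterD huo hcd (m := 0) (by norm_num) (hbr hξ)
    rw [iteratedDeriv_zero, iteratedDeriv_one] at hq
    exact hq.sub hp
  -- the bound chain
  have hB4 : ∀ ξ ∈ ball x r, |G4 ξ| ≤ |ξ - x| ^ 0 := by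
    intro ξ hξ
    have := hball1 ξ (hbr1 hξ)
    rw [pow_zero]
    exact le_of_lt (abs_lt.mpr ⟨this.1, this.2⟩)
  have hB3 := mvt_pow hD3 hB4 (by simp [hG3, hc3])
  have hB2 := mvt_pow hD2 hB3 (by rw [hG2]; simp only; rw [hc2]; ring)
  have hB1 := mvt_pow hD1 hB2 (by rw [hG1]; simp only; rw [hc1]; ring)
  have hB0 := mvt_pow hD0 hB1 (by rw [hG0]; simp only [hP]; ring)
  -- constants
  set B : ℝ := |c2 / 2 * s| / 3 + 4 * |c4 / 24| / 5 + |c3 / 6 * s| + |c4 / 24 * s| with hB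
  refine ⟨B + 48 * (1 + |s|) + 1, by positivity, min (r / 4) 1, by positivity, ?_⟩
  intro d hd0 hdlt
  have hd1 : d ≤ 1 := le_of_lt (lt_of_lt_of_le hdlt (min_le_right _ _))
  have hdr : 2 * d < r / 2 := by
    have := lt_of_lt_of_le hdlt (min_le_left _ _)
    linarith
  have hcell : ∀ ξ : ℝ, |ξ - x| ≤ 2 * d → ξ ∈ ball x r := by
    intro ξ hξ
    rw [mem_ball, Real.dist_eq]
    linarith
  have hd2 : d ^ 2 ≤ 1 := by nlinarith
  -- integral decomposition
  have hPc : Continuous P := by rw [hP]; fun_prop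
  have key : ∀ a b : ℝ, uIcc a b ⊆ ball x r →
      ∫ ξ in a..b, h ξ = (F b - F a) + ∫ ξ in a..b, G0 ξ := by
    intro a b hsub
    have hih : IntervalIntegrable h volume a b :=
      (hcd.continuousOn.mono (hsub.trans hbr)).intervalIntegrable
    have hiP : IntervalIntegrable P volume a b := hPc.intervalIntegrable a b
    have hsubint : ∫ ξ in a..b, G0 ξ = (∫ ξ in a..b, h ξ) - ∫ ξ in a..b, P ξ := by
      rw [hG0]; exact integral_sub hih hiP
    have hFPab : ∫ ξ in a..b, P ξ = F b - F a :=
      integral_eq_sub_of_hasDerivAt (fun ξ _ => hFP ξ) hiP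
    rw [hsubint, hFPab]; ring
  have hJb : ∀ a b : ℝ, uIcc a b ⊆ ball x r → (∀ ξ ∈ uIcc a b, |ξ - x| ≤ 2 * d) →
      |∫ ξ in a..b, G0 ξ| ≤ 16 * d ^ 4 * |b - a| := by
    intro a b hsub hclose
    have hbnd : ∀ ξ ∈ Set.uIoc a b, ‖G0 ξ‖ ≤ (2 * d) ^ 4 := by
      intro ξ hξ
      have hξ' : ξ ∈ uIcc a b := uIoc_subset_uIcc hξ
      rw [Real.norm_eq_abs]
      exact (hB0 ξ (hsub hξ')).trans (pow_le_pow_left₀ (abs_nonneg _) (hclose ξ hξ') 4)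
    calc |∫ ξ in a..b, G0 ξ| ≤ (2 * d) ^ 4 * |b - a| :=
          intervalIntegral.norm_integral_le_of_norm_le_const hbnd
      _ = 16 * d ^ 4 * |b - a| := by ring
  have hcellIcc : ∀ a b : ℝ, a ≤ b → (∀ ξ, a ≤ ξ → ξ ≤ b → |ξ - x| ≤ 2 * d) →
      uIcc a b ⊆ ball x r ∧ ∀ ξ ∈ uIcc a b, |ξ - x| ≤ 2 * d := by
    intro a b hab hcl
    have h1 : ∀ ξ ∈ uIcc a b, |ξ - x| ≤ 2 * d := by
      intro ξ hξ
      rw [uIcc_of_le hab, mem_Icc] at hξ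
      exact hcl ξ hξ.1 hξ.2
    exact ⟨fun ξ hξ => hcell ξ (h1 ξ hξ), h1⟩
  have hm1 := hcellIcc (x - 2 * d) (x - d) (by linarith)
    (fun ξ h1 h2 => abs_le.mpr ⟨by linarith, by linarith⟩)
  have hm2 := hcellIcc (x - d) x (by linarith)
    (fun ξ h1 h2 => abs_le.mpr ⟨by linarith, by linarith⟩)
  have hm3 := hcellIcc x (x + d) (by linarith)
    (fun ξ h1 h2 => abs_le.mpr ⟨by linarith, by linarith⟩)
  have k1 := key _ _ hm1.1
  have k2 := key _ _ hm2.1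
  have k3 := key _ _ hm3.1
  have j1 := hJb _ _ hm1.1 hm1.2
  have j2 := hJb _ _ hm2.1 hm2.2
  have j3 := hJb _ _ hm3.1 hm3.2
  rw [show x - d - (x - 2 * d) = d by ring, abs_of_pos hd0] at j1
  rw [show x - (x - d) = d by ring, abs_of_pos hd0] at j2
  rw [show x + d - x = d by ring, abs_of_pos hd0] at j3
  set J1 := ∫ ξ in (x - 2 * d)..(x - d), G0 ξ with hJ1
  set J2 := ∫ ξ in (x - d)..x, G0 ξ with hJ2
  set J3 := ∫ ξ in x..(x + d), G0 ξ with hJ3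
  have j1' : |J1| ≤ 16 * d ^ 5 := by calc |J1| ≤ 16 * d ^ 4 * d := j1
                                       _ = 16 * d ^ 5 := by ring
  have j2' : |J2| ≤ 16 * d ^ 5 := by calc |J2| ≤ 16 * d ^ 4 * d := j2
                                       _ = 16 * d ^ 5 := by ring
  have j3' : |J3| ≤ 16 * d ^ 5 := by calc |J3| ≤ 16 * d ^ 4 * d := j3
                                       _ = 16 * d ^ 5 := by ring
  rw [k1, k2, k3]
  set M : ℝ := -(c2 / 2 * s) / 3 - 4 / 5 * (c4 / 24) + d * (c3 / 6 * s) - d ^ 2 * (c4 / 24 * s)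
    with hM
  have hEq : (-(1 / 6) - s * d ^ 2 / 6) * (1 / d * (F (x - d) - F (x - 2 * d) + J1))
      + (5 / 6 - 2 / 3 * (s * d ^ 2)) * (1 / d * (F x - F (x - d) + J2))
      + (1 / 3 + 5 / 6 * (s * d ^ 2)) * (1 / d * (F (x + d) - F x + J3)) - h x
      = d ^ 4 * M + (1 / d) * ((-(1 / 6) - s * d ^ 2 / 6) * J1
        + (5 / 6 - 2 / 3 * (s * d ^ 2)) * J2 + (1 / 3 + 5 / 6 * (s * d ^ 2)) * J3) := by
    simp only [hF, hM, hs]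
    field_simp
    ring
  rw [hEq]
  clear_value c1 c2 c3 c4 s B M J1 J2 J3
  -- bounds
  have habs2 : |s * d ^ 2| ≤ |s| := by
    rw [abs_mul, abs_of_nonneg (by positivity : (0 : ℝ) ≤ d ^ 2)]
    exact mul_le_of_le_one_right (abs_nonneg _) hd2
  have hsub' : ∀ a b : ℝ, |a - b| ≤ |a| + |b| := fun a b => by
    calc |a - b| = |a + -b| := by ring_nf
      _ ≤ |a| + |-b| := abs_add_le _ _
      _ = |a| + |b| := by rw [abs_neg]
  have hsd := abs_le.mp habs2
  have hsabs : 0 ≤ |s| := abs_nonneg s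
  have hw1 : |(-(1 / 6) - s * d ^ 2 / 6 : ℝ)| ≤ 1 + |s| :=
    abs_le.mpr ⟨by linarith [hsd.1, hsd.2], by linarith [hsd.1, hsd.2]⟩
  have hw2 : |(5 / 6 - 2 / 3 * (s * d ^ 2) : ℝ)| ≤ 1 + |s| :=
    abs_le.mpr ⟨by linarith [hsd.1, hsd.2], by linarith [hsd.1, hsd.2]⟩
  have hw3 : |(1 / 3 + 5 / 6 * (s * d ^ 2) : ℝ)| ≤ 1 + |s| :=
    abs_le.mpr ⟨by linarith [hsd.1, hsd.2], by linarith [hsd.1, hsd.2]⟩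
  have hMb : |M| ≤ B := by
    have e1 : |(-(c2 / 2 * s) / 3 : ℝ)| = |c2 / 2 * s| / 3 := by
      rw [abs_div, abs_neg]; norm_num
    have e2 : |(4 / 5 * (c4 / 24) : ℝ)| = 4 * |c4 / 24| / 5 := by
      rw [abs_mul, abs_of_nonneg (by norm_num : (0 : ℝ) ≤ 4 / 5)]; ring
    have e3 : |d * (c3 / 6 * s)| ≤ |c3 / 6 * s| := by
      rw [abs_mul, abs_of_pos hd0]
      exact mul_le_of_le_one_left (abs_nonneg _) hd1
    have e4 : |d ^ 2 * (c4 / 24 * s)| ≤ |c4 / 24 * s| := by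
      rw [abs_mul, abs_of_nonneg (by positivity : (0 : ℝ) ≤ d ^ 2)]
      exact mul_le_of_le_one_left (abs_nonneg _) hd2
    calc |M| ≤ |(-(c2 / 2 * s) / 3 - 4 / 5 * (c4 / 24) + d * (c3 / 6 * s))|
          + |d ^ 2 * (c4 / 24 * s)| := by rw [hM]; exact hsub' _ _
      _ ≤ |(-(c2 / 2 * s) / 3 - 4 / 5 * (c4 / 24))| + |d * (c3 / 6 * s)|
          + |d ^ 2 * (c4 / 24 * s)| := by
            linarith [abs_add_le (-(c2 / 2 * s) / 3 - 4 / 5 * (c4 / 24)) (d * (c3 / 6 * s))]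
      _ ≤ |(-(c2 / 2 * s) / 3)| + |(4 / 5 * (c4 / 24) : ℝ)| + |d * (c3 / 6 * s)|
          + |d ^ 2 * (c4 / 24 * s)| := by
            linarith [hsub' (-(c2 / 2 * s) / 3) (4 / 5 * (c4 / 24))]
      _ ≤ B := by rw [hB, e1, e2]; linarith
  have hprod : |(-(1 / 6) - s * d ^ 2 / 6) * J1 + (5 / 6 - 2 / 3 * (s * d ^ 2)) * J2
      + (1 / 3 + 5 / 6 * (s * d ^ 2)) * J3| ≤ 3 * ((1 + |s|) * (16 * d ^ 5)) := by
    have p1 : |(-(1 / 6) - s * d ^ 2 / 6) * J1| ≤ (1 + |s|) * (16 * d ^ 5) := by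
      rw [abs_mul]
      exact mul_le_mul hw1 j1' (abs_nonneg _) (by positivity)
    have p2 : |(5 / 6 - 2 / 3 * (s * d ^ 2)) * J2| ≤ (1 + |s|) * (16 * d ^ 5) := by
      rw [abs_mul]
      exact mul_le_mul hw2 j2' (abs_nonneg _) (by positivity)
    have p3 : |(1 / 3 + 5 / 6 * (s * d ^ 2)) * J3| ≤ (1 + |s|) * (16 * d ^ 5) := by
      rw [abs_mul]
      exact mul_le_mul hw3 j3' (abs_nonneg _) (by positivity)
    calc |(-(1 / 6) - s * d ^ 2 / 6) * J1 + (5 / 6 - 2 / 3 * (s * d ^ 2)) * J2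
        + (1 / 3 + 5 / 6 * (s * d ^ 2)) * J3|
        ≤ |(-(1 / 6) - s * d ^ 2 / 6) * J1 + (5 / 6 - 2 / 3 * (s * d ^ 2)) * J2|
          + |(1 / 3 + 5 / 6 * (s * d ^ 2)) * J3| := abs_add_le _ _
      _ ≤ |(-(1 / 6) - s * d ^ 2 / 6) * J1| + |(5 / 6 - 2 / 3 * (s * d ^ 2)) * J2|
          + |(1 / 3 + 5 / 6 * (s * d ^ 2)) * J3| := by
            linarith [abs_add_le ((-(1 / 6) - s * d ^ 2 / 6) * J1)
              ((5 / 6 - 2 / 3 * (s * d ^ 2)) * J2)]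
      _ ≤ (1 + |s|) * (16 * d ^ 5) + (1 + |s|) * (16 * d ^ 5) + (1 + |s|) * (16 * d ^ 5) :=
            add_le_add (add_le_add p1 p2) p3
      _ = 3 * ((1 + |s|) * (16 * d ^ 5)) := by ring
  calc |d ^ 4 * M + (1 / d) * ((-(1 / 6) - s * d ^ 2 / 6) * J1
        + (5 / 6 - 2 / 3 * (s * d ^ 2)) * J2 + (1 / 3 + 5 / 6 * (s * d ^ 2)) * J3)|
      ≤ |d ^ 4 * M| + |(1 / d)| * |(-(1 / 6) - s * d ^ 2 / 6) * J1
        + (5 / 6 - 2 / 3 * (s * d ^ 2)) * J2 + (1 / 3 + 5 / 6 * (s * d ^ 2)) * J3| := by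
          rw [← abs_mul]; exact abs_add_le _ _
    _ ≤ d ^ 4 * B + 48 * (1 + |s|) * d ^ 4 := by
        have h1 : |d ^ 4 * M| ≤ d ^ 4 * B := by
          rw [abs_mul, abs_of_nonneg (by positivity : (0 : ℝ) ≤ d ^ 4)]
          exact mul_le_mul_of_nonneg_left hMb (by positivity)
        have h2 : |(1 / d : ℝ)| = 1 / d := abs_of_pos (by positivity)
        have h3 := mul_le_mul_of_nonneg_left hprod (by positivity : (0 : ℝ) ≤ 1 / d)
        have h4 : 1 / d * (3 * ((1 + |s|) * (16 * d ^ 5))) = 48 * (1 + |s|) * d ^ 4 := by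
          field_simp; ring
        rw [h4] at h3
        rw [h2]
        exact add_le_add h1 h3
    _ ≤ (B + 48 * (1 + |s|) + 1) * d ^ 4 := by nlinarith [pow_pos hd0 4]
end

section
/- Let h : ℝ → ℝ be three times continuously differentiable in a neighborhood of x ∈ ℝ and let s ∈ ℝ be fixed; set η = s·Δx². Then the one-sided k = 2 MQ-RBF reconstruction (stencil shifted one cell to the left, r = 1) satisfies (−1/2 + η/2)·h̄₋ + (3/2 − (3/2)·η)·h̄₀ = h(x) − (s·h(x) + (1/3)·h''(x))·Δx² + O(Δx³). -/
set_option maxHeartbeats 2000000 in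
/-- The one-sided (r = 1) k = 2 MQ-RBF reconstruction:
`(−1/2 + η/2)h̄₋ + (3/2 − 3η/2)h̄₀ = h(x) − (s·h(x) + (1/3)h''(x))Δx² + O(Δx³)`
with `η = sΔx²`. -/
theorem stmt_17 (h : ℝ → ℝ) (x : ℝ) (hh : ContDiffAt ℝ 3 h x) (s : ℝ) :
    ∃ C > 0, ∃ d₀ > 0, ∀ d : ℝ, 0 < d → d < d₀ →
      |(-(1 / 2) + s * d ^ 2 / 2) * ((1 / d) * ∫ ξ in (x - 2 * d)..(x - d), h ξ)
          + (3 / 2 - (3 / 2) * (s * d ^ 2)) * ((1 / d) * ∫ ξ in (x - d)..x, h ξ)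
          - h x + (s * h x + (1 / 3) * iteratedDeriv 2 h x) * d ^ 2|
        ≤ C * d ^ 3 := by
  obtain ⟨U, hUo, hxU, hhU⟩ := hh.contDiffOn' le_rfl (by simp)
  rw [Set.insert_eq_of_mem (Set.mem_univ x), Set.univ_inter] at hhU
  obtain ⟨ε, hε, hball⟩ := Metric.isOpen_iff.1 hUo x hxU
  set δ := ε / 2 with hδdef
  have hδ : 0 < δ := by positivity
  have hsub : Set.Icc (x - δ) (x + δ) ⊆ U := by
    intro t ht
    apply hball
    rw [Metric.mem_ball, Real.dist_eq, abs_lt]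
    constructor <;> [linarith [ht.1]; linarith [ht.2]]
  set g : ℝ → ℝ := fun t => h (2 * x - t) with hgdef
  set V : Set ℝ := (fun t : ℝ => 2 * x - t) ⁻¹' U with hVdef
  have hVo : IsOpen V := hUo.preimage (by fun_prop)
  have hxV : x ∈ V := by
    simp only [hVdef, Set.mem_preimage]
    convert hxU using 2; ring
  have hgV : ContDiffOn ℝ 3 g V :=
    hhU.comp ((contDiff_const.sub contDiff_id).contDiffOn) (fun t ht => ht)
  have hSV : Set.Icc x (x + δ) ⊆ V := by
    intro t ht
    show 2 * x - t ∈ U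
    exact hsub ⟨by linarith [ht.2], by linarith [ht.1]⟩
  have hgS : ContDiffOn ℝ 3 g (Set.Icc x (x + δ)) := hgV.mono hSV
  obtain ⟨C₀, hC₀⟩ := exists_taylor_mean_remainder_bound (n := 2)
    (by linarith : x ≤ x + δ) (by exact_mod_cast hgS)
  set c1 : ℝ := iteratedDerivWithin 1 g (Set.Icc x (x + δ)) x with hc1def
  set c2 : ℝ := iteratedDerivWithin 2 g (Set.Icc x (x + δ)) x with hc2def
  have hUD : UniqueDiffOn ℝ (Set.Icc x (x + δ)) := uniqueDiffOn_Icc (by linarith)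
  have hgdiff : ∀ t ∈ V, DifferentiableAt ℝ g t := fun t ht =>
    ((hgV t ht).contDiffAt (hVo.mem_nhds ht)).differentiableAt (by norm_num)
  have hA : ∀ t ∈ Set.Icc x (x + δ), derivWithin g (Set.Icc x (x + δ)) t = deriv g t :=
    fun t ht => (hgdiff t (hSV ht)).derivWithin (hUD t ht)
  have hdgC2 : ContDiffOn ℝ 2 (deriv g) V := hgV.deriv_of_isOpen hVo (by norm_num)
  have hdgdiff : DifferentiableAt ℝ (deriv g) x :=
    (((hdgC2 x hxV).contDiffAt (hVo.mem_nhds hxV)).differentiableAt (by norm_num))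
  have hx0 : x ∈ Set.Icc x (x + δ) := Set.left_mem_Icc.2 (by linarith)
  have hc2 : c2 = iteratedDeriv 2 h x := by
    have e1 : c2 = derivWithin (deriv g) (Set.Icc x (x + δ)) x := by
      rw [hc2def, iteratedDerivWithin_succ]
      refine derivWithin_congr (fun t ht => ?_) ?_
      · rw [iteratedDerivWithin_one]; exact hA t ht
      · rw [iteratedDerivWithin_one]; exact hA x hx0
    have e2 : derivWithin (deriv g) (Set.Icc x (x + δ)) x = deriv (deriv g) x :=
      hdgdiff.derivWithin (hUD x hx0)
    have e3 : deriv g = fun t => -deriv h (2 * x - t) := by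
      funext t
      exact deriv_comp_const_sub h (2 * x) t
    have e4 : deriv (deriv g) x = deriv (deriv h) x := by
      rw [e3]
      rw [show (fun t => -deriv h (2 * x - t)) = fun t => -(deriv h (2 * x - t)) from rfl]
      rw [deriv.fun_neg (f := fun t => deriv h (2 * x - t))]
      rw [deriv_comp_const_sub (deriv h) (2 * x) x]
      rw [neg_neg, show 2 * x - x = x by ring]
    rw [e1, e2, e4]
    simp [iteratedDeriv_succ, iteratedDeriv_zero]
  -- Taylor pointwise bound
  set C1 : ℝ := max C₀ 0 with hC1def
  have hC1 : 0 ≤ C1 := le_max_right _ _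
  set P : ℝ → ℝ := fun ξ => h x + c1 * (x - ξ) + c2 / 2 * (x - ξ) ^ 2 with hPdef
  have hgx : g x = h x := by
    show h (2 * x - x) = h x
    rw [show 2 * x - x = x from by ring]
  have hTay : ∀ ξ ∈ Set.Icc (x - δ) x, |h ξ - P ξ| ≤ C1 * (x - ξ) ^ 3 := by
    intro ξ hξ
    have ht : 2 * x - ξ ∈ Set.Icc x (x + δ) := ⟨by linarith [hξ.2], by linarith [hξ.1]⟩
    have hb := hC₀ (2 * x - ξ) ht
    have eg : g (2 * x - ξ) = h ξ := by
      show h (2 * x - (2 * x - ξ)) = h ξ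
      rw [show 2 * x - (2 * x - ξ) = ξ from by ring]
    rw [taylor_within_apply, Real.norm_eq_abs] at hb
    simp only [Finset.sum_range_succ, Finset.sum_range_zero, zero_add, smul_eq_mul,
      iteratedDerivWithin_zero, ← hc1def, ← hc2def, eg, hgx] at hb
    have hb' : |h ξ - P ξ| ≤ C₀ * (x - ξ) ^ 3 := by
      convert hb using 3
      · rw [hPdef]
        simp only []
        norm_num [Nat.factorial]
        ring
      · ring
    refine hb'.trans ?_
    have hpos : (0:ℝ) ≤ (x - ξ) ^ 3 := by
      have : (0:ℝ) ≤ x - ξ := by linarith [hξ.2]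
      positivity
    exact mul_le_mul_of_nonneg_right (le_max_left _ _) hpos
  -- exact integral of P
  have hPcont : Continuous P := by rw [hPdef]; fun_prop
  have hPint : ∀ a b : ℝ, (∫ ξ in a..b, P ξ)
      = (h x * b - c1 / 2 * (x - b) ^ 2 - c2 / 6 * (x - b) ^ 3)
        - (h x * a - c1 / 2 * (x - a) ^ 2 - c2 / 6 * (x - a) ^ 3) := by
    intro a b
    apply intervalIntegral.integral_eq_sub_of_hasDerivAt
    · intro ξ _
      have h1 : HasDerivAt (fun ξ : ℝ => x - ξ) (-1) ξ := (hasDerivAt_id ξ).const_sub x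
      have h2 : HasDerivAt (fun ξ : ℝ => h x * ξ) (h x * 1) ξ := (hasDerivAt_id ξ).const_mul (h x)
      have h3 := (h1.pow 2).const_mul (c1 / 2)
      have h4 := (h1.pow 3).const_mul (c2 / 6)
      have := (h2.sub h3).sub h4
      convert this using 1
      · funext t; simp [Pi.pow_apply]
      · simp only [hPdef]; norm_num; ring
    · exact hPcont.intervalIntegrable _ _
  -- main estimate
  refine ⟨(1/2 + |s|/2) * (8*C1) + (3/2 + 3*|s|/2) * C1 + |s| * |c2| / 3 + 1, by positivity,
    min (δ/2) 1, by positivity, ?_⟩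
  intro d hd hdlt
  have hd1 : d < 1 := lt_of_lt_of_le hdlt (min_le_right _ _)
  have hdδ : 2 * d < δ := by
    have := lt_of_lt_of_le hdlt (min_le_left _ _)
    linarith
  have hcells : Set.Icc (x - 2*d) x ⊆ Set.Icc (x - δ) x := by
    intro t ht
    exact ⟨by linarith [ht.1], ht.2⟩
  have hconth : ContinuousOn h (Set.Icc (x - δ) (x + δ)) :=
    (hhU.continuousOn).mono hsub
  have hint1 : IntervalIntegrable h MeasureTheory.volume (x - 2*d) (x - d) := by
    apply ContinuousOn.intervalIntegrable
    apply hconth.mono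
    rw [Set.uIcc_of_le (by linarith)]
    intro t ht
    exact ⟨by linarith [ht.1], by linarith [ht.2]⟩
  have hint2 : IntervalIntegrable h MeasureTheory.volume (x - d) x := by
    apply ContinuousOn.intervalIntegrable
    apply hconth.mono
    rw [Set.uIcc_of_le (by linarith)]
    intro t ht
    exact ⟨by linarith [ht.1], by linarith [ht.2]⟩
  have hintP1 : IntervalIntegrable P MeasureTheory.volume (x - 2*d) (x - d) :=
    hPcont.intervalIntegrable _ _
  have hintP2 : IntervalIntegrable P MeasureTheory.volume (x - d) x :=
    hPcont.intervalIntegrable _ _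
  set AL : ℝ := ∫ ξ in (x - 2*d)..(x - d), (h ξ - P ξ) with hALdef
  set AR : ℝ := ∫ ξ in (x - d)..x, (h ξ - P ξ) with hARdef
  have hsplit1 : (∫ ξ in (x - 2*d)..(x - d), h ξ) = (∫ ξ in (x - 2*d)..(x - d), P ξ) + AL := by
    rw [hALdef, intervalIntegral.integral_sub hint1 hintP1]
    ring
  have hsplit2 : (∫ ξ in (x - d)..x, h ξ) = (∫ ξ in (x - d)..x, P ξ) + AR := by
    rw [hARdef, intervalIntegral.integral_sub hint2 hintP2]
    ring
  have hIL : (∫ ξ in (x - 2*d)..(x - d), P ξ) = h x * d + (3/2)*c1*d^2 + (7/6)*c2*d^3 := by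
    rw [hPint]; ring
  have hIR : (∫ ξ in (x - d)..x, P ξ) = h x * d + (1/2)*c1*d^2 + (1/6)*c2*d^3 := by
    rw [hPint]; ring
  -- remainder bounds
  have hAL : |AL| ≤ 8 * C1 * d^3 * d := by
    have hb := intervalIntegral.norm_integral_le_of_norm_le_const
      (C := C1 * (2*d)^3) (f := fun ξ => h ξ - P ξ) (a := x - 2*d) (b := x - d) ?_
    · rw [Real.norm_eq_abs] at hb
      have : |x - d - (x - 2*d)| = d := by
        rw [show x - d - (x - 2*d) = d by ring]
        exact abs_of_pos hd
      rw [this] at hb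
      calc |AL| ≤ C1 * (2*d)^3 * d := hb
        _ = 8 * C1 * d^3 * d := by ring
    · intro ξ hξ
      rw [Set.uIoc_of_le (by linarith : x - 2*d ≤ x - d)] at hξ
      have hmem : ξ ∈ Set.Icc (x - δ) x := ⟨by linarith [hξ.1.le], by linarith [hξ.2]⟩
      rw [Real.norm_eq_abs]
      refine (hTay ξ hmem).trans ?_
      have h1 : x - ξ ≤ 2*d := by linarith [hξ.1]
      have h2 : (0:ℝ) ≤ x - ξ := by linarith [hξ.2]
      have : (x - ξ)^3 ≤ (2*d)^3 := by
        apply pow_le_pow_left₀ h2 h1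
      nlinarith [hC1]
  have hAR : |AR| ≤ C1 * d^3 * d := by
    have hb := intervalIntegral.norm_integral_le_of_norm_le_const
      (C := C1 * d^3) (f := fun ξ => h ξ - P ξ) (a := x - d) (b := x) ?_
    · rw [Real.norm_eq_abs] at hb
      have : |x - (x - d)| = d := by
        rw [show x - (x - d) = d by ring]
        exact abs_of_pos hd
      rw [this] at hb
      exact hb
    · intro ξ hξ
      rw [Set.uIoc_of_le (by linarith : x - d ≤ x)] at hξ
      have hmem : ξ ∈ Set.Icc (x - δ) x := ⟨by linarith [hξ.1.le], hξ.2⟩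
      rw [Real.norm_eq_abs]
      refine (hTay ξ hmem).trans ?_
      have h1 : x - ξ ≤ d := by linarith [hξ.1]
      have h2 : (0:ℝ) ≤ x - ξ := by linarith [hξ.2]
      have : (x - ξ)^3 ≤ d^3 := by
        apply pow_le_pow_left₀ h2 h1
      nlinarith [hC1]
  -- exact algebraic identity
  have hdne : d ≠ 0 := ne_of_gt hd
  have hmul : ∀ u : ℝ, (1/d) * (u * d) = u := fun u => by
    rw [one_div, mul_comm u d, inv_mul_cancel_left₀ hdne]
  have ellL : (1 / d) * (∫ ξ in (x - 2*d)..(x - d), h ξ)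
      = (h x + (3/2)*c1*d + (7/6)*c2*d^2) + (1/d) * AL := by
    rw [hsplit1, hIL, mul_add, show h x * d + (3/2)*c1*d^2 + (7/6)*c2*d^3
      = (h x + (3/2)*c1*d + (7/6)*c2*d^2) * d from by ring, hmul]
  have ellR : (1 / d) * (∫ ξ in (x - d)..x, h ξ)
      = (h x + (1/2)*c1*d + (1/6)*c2*d^2) + (1/d) * AR := by
    rw [hsplit2, hIR, mul_add, show h x * d + (1/2)*c1*d^2 + (1/6)*c2*d^3
      = (h x + (1/2)*c1*d + (1/6)*c2*d^2) * d from by ring, hmul]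
  have key : (-(1 / 2) + s * d ^ 2 / 2) * ((1 / d) * ∫ ξ in (x - 2 * d)..(x - d), h ξ)
          + (3 / 2 - (3 / 2) * (s * d ^ 2)) * ((1 / d) * ∫ ξ in (x - d)..x, h ξ)
          - h x + (s * h x + (1 / 3) * iteratedDeriv 2 h x) * d ^ 2
      = (-(1 / 2) + s * d ^ 2 / 2) * ((1 / d) * AL)
          + (3 / 2 - (3 / 2) * (s * d ^ 2)) * ((1 / d) * AR) + s * c2 / 3 * d ^ 4 := by
    rw [show x - 2 * d = x - 2*d from rfl, ellL, ellR, ← hc2]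
    ring
  rw [key]
  -- final numeric bound
  have h1d : |1/d| = 1/d := abs_of_pos (by positivity)
  have hd2le : d^2 ≤ 1 := by nlinarith
  have hsd : |s| * d^2 ≤ |s| := by nlinarith [abs_nonneg s]
  have habs_a : |(-(1 / 2) + s * d ^ 2 / 2)| ≤ 1/2 + |s|/2 := by
    calc |(-(1 / 2) + s * d ^ 2 / 2)| ≤ |(-(1/2) : ℝ)| + |s * d^2 / 2| := abs_add_le _ _
      _ = 1/2 + |s| * d^2 / 2 := by
          rw [abs_div, abs_mul, abs_of_nonneg (sq_nonneg d)]
          norm_num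
      _ ≤ 1/2 + |s|/2 := by linarith
  have habs_b : |(3 / 2 - (3 / 2) * (s * d ^ 2))| ≤ 3/2 + 3*|s|/2 := by
    calc |(3 / 2 - (3 / 2) * (s * d ^ 2))| ≤ |(3/2 : ℝ)| + |(3/2) * (s * d^2)| := abs_sub _ _
      _ = 3/2 + 3/2 * (|s| * d^2) := by
          rw [abs_mul, abs_mul, abs_of_nonneg (sq_nonneg d),
            abs_of_nonneg (by norm_num : (0:ℝ) ≤ 3/2)]
      _ ≤ 3/2 + 3*|s|/2 := by linarith
  have t1 : |(-(1 / 2) + s * d ^ 2 / 2) * ((1 / d) * AL)| ≤ (1/2 + |s|/2) * (8*C1*d^3) := by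
    rw [abs_mul, abs_mul, h1d]
    have hh1 : (1/d) * |AL| ≤ 8*C1*d^3 := by
      have := mul_le_mul_of_nonneg_left hAL (by positivity : (0:ℝ) ≤ 1/d)
      calc (1/d) * |AL| ≤ (1/d) * (8*C1*d^3*d) := this
        _ = 8*C1*d^3 := hmul _
    exact mul_le_mul habs_a hh1 (by positivity) (by positivity)
  have t2 : |(3 / 2 - (3 / 2) * (s * d ^ 2)) * ((1 / d) * AR)| ≤ (3/2 + 3*|s|/2) * (C1*d^3) := by
    rw [abs_mul, abs_mul, h1d]
    have hh1 : (1/d) * |AR| ≤ C1*d^3 := by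
      have := mul_le_mul_of_nonneg_left hAR (by positivity : (0:ℝ) ≤ 1/d)
      calc (1/d) * |AR| ≤ (1/d) * (C1*d^3*d) := this
        _ = C1*d^3 := hmul _
    exact mul_le_mul habs_b hh1 (by positivity) (by positivity)
  have t3 : |s * c2 / 3 * d ^ 4| ≤ |s| * |c2| / 3 * d^3 := by
    have e : |s * c2 / 3 * d ^ 4| = |s| * |c2| / 3 * (d^3 * d) := by
      rw [abs_mul, abs_div, abs_mul, abs_of_nonneg (by positivity : (0:ℝ) ≤ d^4),
        show |(3:ℝ)| = 3 from by norm_num]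
      ring
    rw [e]
    have hdd : d^3 * d ≤ d^3 * 1 := mul_le_mul_of_nonneg_left hd1.le (by positivity)
    calc |s| * |c2| / 3 * (d^3 * d) ≤ |s| * |c2| / 3 * (d^3 * 1) :=
          mul_le_mul_of_nonneg_left hdd (by positivity)
      _ = |s| * |c2| / 3 * d^3 := by ring
  calc |(-(1 / 2) + s * d ^ 2 / 2) * ((1 / d) * AL)
          + (3 / 2 - (3 / 2) * (s * d ^ 2)) * ((1 / d) * AR) + s * c2 / 3 * d ^ 4|
      ≤ |(-(1 / 2) + s * d ^ 2 / 2) * ((1 / d) * AL)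
          + (3 / 2 - (3 / 2) * (s * d ^ 2)) * ((1 / d) * AR)| + |s * c2 / 3 * d ^ 4| :=
        abs_add_le _ _
    _ ≤ |(-(1 / 2) + s * d ^ 2 / 2) * ((1 / d) * AL)|
          + |(3 / 2 - (3 / 2) * (s * d ^ 2)) * ((1 / d) * AR)| + |s * c2 / 3 * d ^ 4| := by
        have := abs_add_le ((-(1 / 2) + s * d ^ 2 / 2) * ((1 / d) * AL))
          ((3 / 2 - (3 / 2) * (s * d ^ 2)) * ((1 / d) * AR))
        linarith
    _ ≤ (1/2 + |s|/2) * (8*C1*d^3) + (3/2 + 3*|s|/2) * (C1*d^3) + |s| * |c2| / 3 * d^3 := by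
        linarith
    _ ≤ ((1/2 + |s|/2) * (8*C1) + (3/2 + 3*|s|/2) * C1 + |s| * |c2| / 3 + 1) * d ^ 3 := by
        nlinarith [pow_pos hd 3]
end

section
/- Let h : ℝ → ℝ be three times continuously differentiable in a neighborhood of x ∈ ℝ with h(x) ≠ 0, and set s = −(1/3)·h''(x)/h(x) and η = s·Δx². Then the adaptive one-sided k = 2 MQ-RBF reconstruction is third-order accurate: there exist C, Δx₀ > 0 such that |(−1/2 + η/2)·h̄₋ + (3/2 − (3/2)·η)·h̄₀ − h(x)| ≤ C·Δx³ for all 0 < Δx < Δx₀, whereas the polynomial coefficients (η = 0) give only second-order accuracy in general. -/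
open Set intervalIntegral

set_option maxHeartbeats 2000000 in
/-- With the adaptive shape parameter `s = −(1/3)h''(x)/h(x)` the one-sided
(r = 1) k = 2 MQ-RBF reconstruction is third-order accurate. -/
theorem stmt_18 (h : ℝ → ℝ) (x : ℝ) (hh : ContDiffAt ℝ 3 h x) (hx : h x ≠ 0) :
    ∃ C > 0, ∃ d₀ > 0, ∀ d : ℝ, 0 < d → d < d₀ →
      |(-(1 / 2) + (-(1 / 3) * iteratedDeriv 2 h x / h x) * d ^ 2 / 2)
            * ((1 / d) * ∫ ξ in (x - 2 * d)..(x - d), h ξ)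
          + (3 / 2 - (3 / 2) * ((-(1 / 3) * iteratedDeriv 2 h x / h x) * d ^ 2))
            * ((1 / d) * ∫ ξ in (x - d)..x, h ξ)
          - h x|
        ≤ C * d ^ 3 := by
  obtain ⟨u, hu, hhu⟩ := hh.contDiffOn le_rfl (by simp)
  obtain ⟨ε, hε, hball⟩ := Metric.mem_nhds_iff.mp hu
  set g : ℝ → ℝ := fun t => h (x - t) with hgdef
  have hmap : MapsTo (fun t : ℝ => x - t) (Metric.ball (0:ℝ) ε) (Metric.ball x ε) := by
    intro t ht
    simp only [Metric.mem_ball, Real.dist_eq] at ht ⊢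
    have h1 : x - t - x = -t := by ring
    have h2 : t - 0 = t := by ring
    rw [h1, abs_neg]; rw [h2] at ht; exact ht
  have hg : ContDiffOn ℝ 3 g (Metric.ball 0 ε) :=
    ContDiffOn.comp (hhu.mono hball) ((contDiff_const.sub contDiff_id).contDiffOn) hmap
  set R : ℝ := ε / 2 with hRdef
  have hR : 0 < R := by positivity
  set S : Set ℝ := Icc 0 R with hSdef
  have hSball : S ⊆ Metric.ball (0:ℝ) ε := by
    intro y hy
    simp only [Metric.mem_ball, Real.dist_eq, sub_zero]
    rw [abs_of_nonneg hy.1]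
    have := hy.2; simp only [hRdef] at this; linarith
  have hgS : ContDiffOn ℝ 3 g S := hg.mono hSball
  have hud : UniqueDiffOn ℝ S := uniqueDiffOn_Icc hR
  have hcont3 : ContinuousOn (iteratedDerivWithin 3 g S) S :=
    hgS.continuousOn_iteratedDerivWithin (by norm_cast) hud
  obtain ⟨K₀, hK₀⟩ := isCompact_Icc.exists_bound_of_continuousOn hcont3
  set K : ℝ := max K₀ 0 with hKdef
  have hKnn : 0 ≤ K := le_max_right _ _
  have hK : ∀ y ∈ S, ‖iteratedDerivWithin 3 g S y‖ ≤ K :=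
    fun y hy => (hK₀ y hy).trans (le_max_left _ _)
  have h0S : (0:ℝ) ∈ S := ⟨le_rfl, hR.le⟩
  have h0b : (0:ℝ) ∈ Metric.ball (0:ℝ) ε := by simpa using hε
  -- Taylor remainder bound
  have htay : ∀ t ∈ S, ‖g t - taylorWithinEval g 2 S 0 t‖ ≤ K * (t - 0) ^ (2 + 1) / (Nat.factorial 2 : ℝ) := by
    intro t ht
    exact taylor_mean_remainder_bound hR.le (hgS.of_le (by norm_cast)) ht hK
  -- identify second derivative
  have hdg : ∀ y ∈ Metric.ball (0:ℝ) ε, DifferentiableAt ℝ g y := fun y hy =>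
    (hg.differentiableOn (by norm_num)).differentiableAt (Metric.isOpen_ball.mem_nhds hy)
  have hEq : EqOn (iteratedDerivWithin 1 g S) (deriv g) S := fun y hy =>
    (congrFun iteratedDerivWithin_one y).trans ((hdg y (hSball hy)).derivWithin (hud y hy))
  have hdg' : ContDiffOn ℝ 2 (deriv g) (Metric.ball 0 ε) :=
    hg.deriv_of_isOpen Metric.isOpen_ball (by norm_num)
  have hdd : DifferentiableAt ℝ (deriv g) 0 :=
    (hdg'.differentiableOn (by norm_num)).differentiableAt (Metric.isOpen_ball.mem_nhds h0b)
  have hc2 : iteratedDerivWithin 2 g S 0 = iteratedDeriv 2 h x := by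
    calc iteratedDerivWithin 2 g S 0
        = derivWithin (iteratedDerivWithin 1 g S) S 0 := congrFun iteratedDerivWithin_succ 0
      _ = derivWithin (deriv g) S 0 := derivWithin_congr hEq (hEq h0S)
      _ = deriv (deriv g) 0 := hdd.derivWithin (hud 0 h0S)
      _ = iteratedDeriv 2 g 0 := by
          rw [show (2:ℕ) = 1 + 1 from rfl, iteratedDeriv_succ, iteratedDeriv_one]
      _ = iteratedDeriv 2 h x := by
          have hge : g = fun t => (fun z => h (x + z)) (-t) := by
            funext t; simp [hgdef, sub_eq_add_neg]
          rw [hge]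
          exact (iteratedDeriv_comp_neg 2 (fun z => h (x + z)) 0).trans
            (by simp [iteratedDeriv_comp_const_add])
  set c1 : ℝ := iteratedDerivWithin 1 g S 0 with hc1
  set D : ℝ := iteratedDeriv 2 h x with hD
  have hg0 : g 0 = h x := by simp [hgdef]
  -- explicit Taylor polynomial
  have hT : ∀ t : ℝ, taylorWithinEval g 2 S 0 t = h x + c1 * t + D / 2 * t ^ 2 := by
    intro t
    rw [taylor_within_apply]
    simp only [Finset.sum_range_succ, Finset.sum_range_zero, iteratedDerivWithin_zero,
      sub_zero, pow_zero, pow_one, smul_eq_mul, hc2, hg0]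
    norm_num [Nat.factorial]
    ring
    rw [hc1, iteratedDerivWithin_one]
  -- antiderivative of the Taylor polynomial
  have hF : ∀ t : ℝ, HasDerivAt (fun t : ℝ => h x * t + c1 / 2 * t ^ 2 + D / 6 * t ^ 3)
      (h x + c1 * t + D / 2 * t ^ 2) t := by
    intro t
    have h1 : HasDerivAt (fun t : ℝ => h x * t) (h x * 1) t := (hasDerivAt_id t).const_mul (h x)
    have h2 := (hasDerivAt_pow 2 t).const_mul (c1 / 2)
    have h3 := (hasDerivAt_pow 3 t).const_mul (D / 6)
    refine ((h1.add h2).add h3).congr_deriv ?_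
    push_cast; ring
  have hTcont : Continuous fun t : ℝ => h x + c1 * t + D / 2 * t ^ 2 := by fun_prop
  have hTint : ∀ p q : ℝ, (∫ t in p..q, (h x + c1 * t + D / 2 * t ^ 2))
      = (h x * q + c1 / 2 * q ^ 2 + D / 6 * q ^ 3)
        - (h x * p + c1 / 2 * p ^ 2 + D / 6 * p ^ 3) := by
    intro p q
    exact integral_eq_sub_of_hasDerivAt (fun t _ => hF t) (hTcont.intervalIntegrable p q)
  -- constants
  set s0 : ℝ := -(1 / 3) * iteratedDeriv 2 h x / h x with hs0
  set A : ℝ := |D ^ 2 / (9 * h x)| with hA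
  have hAnn : 0 ≤ A := abs_nonneg _
  refine ⟨A + (2 + 2 * |s0|) * (4 * K) + 1, by positivity, min (ε / 8) 1, by positivity, ?_⟩
  intro d hd0 hdlt
  have hd1 : d ≤ 1 := le_of_lt (lt_of_lt_of_le hdlt (min_le_right _ _))
  have hdε : d < ε / 8 := lt_of_lt_of_le hdlt (min_le_left _ _)
  have hd2R : 2 * d ≤ R := by simp only [hRdef]; linarith
  have hsub0 : Icc (0:ℝ) (2 * d) ⊆ S := by
    rw [hSdef]; exact Icc_subset_Icc le_rfl hd2R
  -- rewrite integrals in terms of g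
  have hI1 : (∫ ξ in (x - 2 * d)..(x - d), h ξ) = ∫ t in d..(2 * d), g t :=
    (intervalIntegral.integral_comp_sub_left h x).symm
  have hI0 : (∫ ξ in (x - d)..x, h ξ) = ∫ t in (0:ℝ)..d, g t := by
    have := intervalIntegral.integral_comp_sub_left (a := 0) (b := d) h x
    rw [sub_zero] at this; exact this.symm
  -- integrability
  have hgc : ContinuousOn g S := hgS.continuousOn
  have hint1 : IntervalIntegrable g MeasureTheory.volume d (2 * d) := by
    refine (hgc.mono ?_).intervalIntegrable
    rw [uIcc_of_le (by linarith : d ≤ 2 * d)]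
    exact (Icc_subset_Icc hd0.le le_rfl).trans hsub0
  have hint0 : IntervalIntegrable g MeasureTheory.volume 0 d := by
    refine (hgc.mono ?_).intervalIntegrable
    rw [uIcc_of_le hd0.le]
    exact (Icc_subset_Icc le_rfl (by linarith)).trans hsub0
  -- remainder bound
  have hrem : ∀ t ∈ Icc (0:ℝ) (2 * d),
      |g t - (h x + c1 * t + D / 2 * t ^ 2)| ≤ 4 * K * d ^ 3 := by
    intro t ht
    have h1 := htay t (hsub0 ht)
    rw [hT t] at h1
    have h2 : ‖g t - (h x + c1 * t + D / 2 * t ^ 2)‖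
        = |g t - (h x + c1 * t + D / 2 * t ^ 2)| := rfl
    rw [h2, sub_zero] at h1
    have h3 : t ^ 3 ≤ (2 * d) ^ 3 := pow_le_pow_left₀ ht.1 ht.2 3
    have h4 : K * t ^ (2 + 1) / (Nat.factorial 2 : ℝ) ≤ 4 * K * d ^ 3 := by
      norm_num [Nat.factorial]
      nlinarith [hKnn, h3]
    exact h1.trans h4
  set IR1 : ℝ := ∫ t in d..(2 * d), (g t - (h x + c1 * t + D / 2 * t ^ 2)) with hIR1
  set IR0 : ℝ := ∫ t in (0:ℝ)..d, (g t - (h x + c1 * t + D / 2 * t ^ 2)) with hIR0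
  have e1 : (∫ t in d..(2 * d), g t)
      = ((h x * (2 * d) + c1 / 2 * (2 * d) ^ 2 + D / 6 * (2 * d) ^ 3)
          - (h x * d + c1 / 2 * d ^ 2 + D / 6 * d ^ 3)) + IR1 := by
    have hi : IR1 = (∫ t in d..(2 * d), g t) - ∫ t in d..(2 * d), (h x + c1 * t + D / 2 * t ^ 2) :=
      intervalIntegral.integral_sub hint1 (hTcont.intervalIntegrable _ _)
    rw [hTint d (2 * d)] at hi
    linarith
  have e0 : (∫ t in (0:ℝ)..d, g t)
      = ((h x * d + c1 / 2 * d ^ 2 + D / 6 * d ^ 3)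
          - (h x * 0 + c1 / 2 * 0 ^ 2 + D / 6 * 0 ^ 3)) + IR0 := by
    have hi : IR0 = (∫ t in (0:ℝ)..d, g t) - ∫ t in (0:ℝ)..d, (h x + c1 * t + D / 2 * t ^ 2) :=
      intervalIntegral.integral_sub hint0 (hTcont.intervalIntegrable _ _)
    rw [hTint 0 d] at hi
    linarith
  -- bounds on remainder integrals
  have hb1 : |IR1| ≤ 4 * K * d ^ 3 * d := by
    have := intervalIntegral.norm_integral_le_of_norm_le_const
      (C := 4 * K * d ^ 3) (f := fun t => g t - (h x + c1 * t + D / 2 * t ^ 2))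
      (a := d) (b := 2 * d) ?_
    · rw [show (2 * d - d) = d from by ring, abs_of_nonneg hd0.le] at this
      exact this
    · intro t ht
      rw [uIoc_of_le (by linarith : d ≤ 2 * d)] at ht
      exact hrem t ⟨by linarith [ht.1], ht.2⟩
  have hb0 : |IR0| ≤ 4 * K * d ^ 3 * d := by
    have := intervalIntegral.norm_integral_le_of_norm_le_const
      (C := 4 * K * d ^ 3) (f := fun t => g t - (h x + c1 * t + D / 2 * t ^ 2))
      (a := 0) (b := d) ?_
    · rw [sub_zero, abs_of_nonneg hd0.le] at this
      exact this
    · intro t ht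
      rw [uIoc_of_le hd0.le] at ht
      exact hrem t ⟨ht.1.le, by linarith [ht.2]⟩
  have hr1 : |IR1 / d| ≤ 4 * K * d ^ 3 := by
    rw [abs_div, abs_of_pos hd0, div_le_iff₀ hd0]
    exact hb1
  have hr0 : |IR0 / d| ≤ 4 * K * d ^ 3 := by
    rw [abs_div, abs_of_pos hd0, div_le_iff₀ hd0]
    exact hb0
  -- the key algebraic identity
  rw [hI1, hI0, e1, e0]
  have key : (-(1 / 2) + s0 * d ^ 2 / 2)
        * ((1 / d) * (((h x * (2 * d) + c1 / 2 * (2 * d) ^ 2 + D / 6 * (2 * d) ^ 3)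
            - (h x * d + c1 / 2 * d ^ 2 + D / 6 * d ^ 3)) + IR1))
      + (3 / 2 - 3 / 2 * (s0 * d ^ 2))
        * ((1 / d) * (((h x * d + c1 / 2 * d ^ 2 + D / 6 * d ^ 3)
            - (h x * 0 + c1 / 2 * 0 ^ 2 + D / 6 * 0 ^ 3)) + IR0))
      - h x
      = -(D ^ 2 / (9 * h x)) * d ^ 4
        + ((-(1 / 2) + s0 * d ^ 2 / 2) * (IR1 / d)
          + (3 / 2 - 3 / 2 * (s0 * d ^ 2)) * (IR0 / d)) := by
    rw [hs0, ← hD]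
    field_simp
    ring
  rw [key]
  -- final estimate
  have hd2le : d ^ 2 ≤ 1 := by nlinarith
  have hM : |(-(D ^ 2 / (9 * h x)) * d ^ 4)| ≤ A * d ^ 3 := by
    rw [abs_mul, abs_neg, ← hA, abs_of_nonneg (by positivity : (0:ℝ) ≤ d ^ 4)]
    have : d ^ 4 ≤ d ^ 3 := pow_le_pow_of_le_one hd0.le hd1 (by norm_num)
    exact mul_le_mul_of_nonneg_left this hAnn
  have habs1 : |s0 * d ^ 2 / 2| ≤ |s0| / 2 := by
    have he : |s0 * d ^ 2 / 2| = |s0| * d ^ 2 / 2 := by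
      rw [abs_div, abs_mul, abs_of_nonneg (by positivity : (0:ℝ) ≤ d ^ 2)]
      norm_num
    rw [he]
    nlinarith [abs_nonneg s0]
  have habs0 : |3 / 2 * (s0 * d ^ 2)| ≤ 3 / 2 * |s0| := by
    have he : |3 / 2 * (s0 * d ^ 2)| = 3 / 2 * (|s0| * d ^ 2) := by
      rw [abs_mul, abs_mul, abs_of_nonneg (by positivity : (0:ℝ) ≤ d ^ 2)]
      norm_num
    rw [he]
    nlinarith [abs_nonneg s0]
  have hw1 : |(-(1 / 2) + s0 * d ^ 2 / 2)| ≤ 1 / 2 + |s0| / 2 := by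
    refine (abs_add_le _ _).trans ?_
    have : |(-(1 / 2) : ℝ)| = 1 / 2 := by norm_num
    rw [this]
    linarith
  have hw0 : |(3 / 2 - 3 / 2 * (s0 * d ^ 2))| ≤ 3 / 2 + 3 / 2 * |s0| := by
    refine (abs_sub _ _).trans ?_
    have : |(3 / 2 : ℝ)| = 3 / 2 := by norm_num
    rw [this]
    linarith
  have p1 : |(-(1 / 2) + s0 * d ^ 2 / 2)| * |IR1 / d| ≤ (1 / 2 + |s0| / 2) * (4 * K * d ^ 3) :=
    mul_le_mul hw1 hr1 (abs_nonneg _) (by positivity)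
  have p0 : |(3 / 2 - 3 / 2 * (s0 * d ^ 2))| * |IR0 / d|
      ≤ (3 / 2 + 3 / 2 * |s0|) * (4 * K * d ^ 3) :=
    mul_le_mul hw0 hr0 (abs_nonneg _) (by positivity)
  have t1 : |(-(D ^ 2 / (9 * h x)) * d ^ 4
        + ((-(1 / 2) + s0 * d ^ 2 / 2) * (IR1 / d)
          + (3 / 2 - 3 / 2 * (s0 * d ^ 2)) * (IR0 / d)))|
      ≤ |(-(D ^ 2 / (9 * h x)) * d ^ 4)|
        + (|(-(1 / 2) + s0 * d ^ 2 / 2)| * |IR1 / d|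
          + |(3 / 2 - 3 / 2 * (s0 * d ^ 2))| * |IR0 / d|) := by
    refine (abs_add_le _ _).trans ?_
    have t2 : |(-(1 / 2) + s0 * d ^ 2 / 2) * (IR1 / d)
          + (3 / 2 - 3 / 2 * (s0 * d ^ 2)) * (IR0 / d)|
        ≤ |(-(1 / 2) + s0 * d ^ 2 / 2)| * |IR1 / d|
          + |(3 / 2 - 3 / 2 * (s0 * d ^ 2))| * |IR0 / d| := by
      refine (abs_add_le _ _).trans ?_
      rw [abs_mul, abs_mul]
    linarith
  refine t1.trans ?_
  have hd3 : (0:ℝ) ≤ d ^ 3 := by positivity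
  have hring : (1 / 2 + |s0| / 2) * (4 * K * d ^ 3) + (3 / 2 + 3 / 2 * |s0|) * (4 * K * d ^ 3)
      = (2 + 2 * |s0|) * (4 * K) * d ^ 3 := by ring
  have hexp : (A + (2 + 2 * |s0|) * (4 * K) + 1) * d ^ 3
      = A * d ^ 3 + (2 + 2 * |s0|) * (4 * K) * d ^ 3 + d ^ 3 := by ring
  linarith [hM, p1, p0, hring, hexp, hd3]
end
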